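/- arXiv:2004.04215 — 7 statements merged into one kernel-verified Lean document; each statement's English description precedes it below -/
import Mathlib

section
/- Define a sequence (a_n) by a_0 = 1, a_1 = 1, a_2 = 1, and a_n = a_{n-1} - z^2 a_{n-3} for n ≥ 3. Then under the substitution z^2 = t(1-t)^2 with t ≠ 1/3 and 0 < t < 4/3, a_n = (1/(3t-1)) [ -r1^{n+1} + ((3t+W)/(2W)) r2^{n+1} - ((3t-W)/(2W)) r3^{n+1} ], where W = sqrt(4t-3t^2), r1 = 1-t, r2 = (t+W)/2, r3 = (t-W)/2. -/
/-- The sequence a₀ = a₁ = a₂ = 1, aₙ = aₙ₋₁ - z²aₙ₋₃, with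
z² = t(1-t)², 0 < t < 4/3, t ≠ 1/3, has the closed form
aₙ = (1/(3t-1))[-r₁ⁿ⁺¹ + ((3t+W)/(2W)) r₂ⁿ⁺¹ - ((3t-W)/(2W)) r₃ⁿ⁺¹]. -/
theorem deutsch_sequence_closed_form (t z : ℝ) (ht : 0 < t) (ht' : t < 4/3)
    (ht3 : t ≠ 1/3) (hz : z ^ 2 = t * (1 - t) ^ 2)
    (a : ℕ → ℝ) (h0 : a 0 = 1) (h1 : a 1 = 1) (h2 : a 2 = 1)
    (hrec : ∀ n, 3 ≤ n → a n = a (n - 1) - z ^ 2 * a (n - 3)) :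
    ∀ n : ℕ,
      a n =
        (1 / (3 * t - 1)) *
          (-(1 - t) ^ (n + 1)
            + ((3 * t + Real.sqrt (4 * t - 3 * t ^ 2)) / (2 * Real.sqrt (4 * t - 3 * t ^ 2)))
              * ((t + Real.sqrt (4 * t - 3 * t ^ 2)) / 2) ^ (n + 1)
            - ((3 * t - Real.sqrt (4 * t - 3 * t ^ 2)) / (2 * Real.sqrt (4 * t - 3 * t ^ 2)))
              * ((t - Real.sqrt (4 * t - 3 * t ^ 2)) / 2) ^ (n + 1)) := by
  set W := Real.sqrt (4 * t - 3 * t ^ 2) with hWdef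
  have hW2 : W ^ 2 = 4 * t - 3 * t ^ 2 := Real.sq_sqrt (by nlinarith)
  have hW0 : W ≠ 0 := ne_of_gt (Real.sqrt_pos.2 (by nlinarith))
  have h31 : 3 * t - 1 ≠ 0 := fun h => ht3 (by linarith)
  set f : ℕ → ℝ := fun n =>
    (1 / (3 * t - 1)) *
      (-(1 - t) ^ (n + 1)
        + ((3 * t + W) / (2 * W)) * ((t + W) / 2) ^ (n + 1)
        - ((3 * t - W) / (2 * W)) * ((t - W) / 2) ^ (n + 1)) with hf
  have hf0 : f 0 = 1 := by
    simp only [hf]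
    field_simp
    ring
  have hf1 : f 1 = 1 := by
    simp only [hf]
    field_simp
    linear_combination (1/2) * W * hW2
  have hf2 : f 2 = 1 := by
    simp only [hf]
    field_simp
    linear_combination (3/2) * t * W * hW2
  have e1 : (1 - t) ^ 3 = (1 - t) ^ 2 - z ^ 2 := by
    rw [hz]; ring
  have e2 : ((t + W) / 2) ^ 3 = ((t + W) / 2) ^ 2 - z ^ 2 := by
    rw [hz]; linear_combination ((3 * t + W) / 8 - 1 / 4) * hW2
  have e3 : ((t - W) / 2) ^ 3 = ((t - W) / 2) ^ 2 - z ^ 2 := by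
    rw [hz]; linear_combination ((3 * t - W) / 8 - 1 / 4) * hW2
  have hfrec : ∀ n : ℕ, f (n + 3) = f (n + 2) - z ^ 2 * f n := by
    intro n
    simp only [hf]
    linear_combination
      (1 / (3 * t - 1)) * (-(1 - t) ^ (n + 1)) * e1
      + (1 / (3 * t - 1)) * ((3 * t + W) / (2 * W)) * ((t + W) / 2) ^ (n + 1) * e2
      - (1 / (3 * t - 1)) * ((3 * t - W) / (2 * W)) * ((t - W) / 2) ^ (n + 1) * e3
  have key : ∀ n : ℕ, a n = f n ∧ a (n + 1) = f (n + 1) ∧ a (n + 2) = f (n + 2) := by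
    intro n
    induction n with
    | zero => exact ⟨by rw [h0, hf0], by rw [h1, hf1], by rw [h2, hf2]⟩
    | succ m ih =>
      obtain ⟨i0, i1, i2⟩ := ih
      refine ⟨i1, i2, ?_⟩
      have h := hrec (m + 3) (by omega)
      simp only [show m + 3 - 1 = m + 2 from rfl, show m + 3 - 3 = m from rfl] at h
      rw [h, i0, i2, hfrec]
  exact fun n => (key n).1
end

section
/- The number of Deutsch paths from (0,0) to (2N+i, 2K+i) (for i ∈ {0,1}, N ≥ K ≥ 0) equals C(3N-K+i+1, N-K) - 3·C(3N-K+i, N-K-1). -/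
/-- A Deutsch step: up-step 1 or a down-step -1, -3, -5, .... -/
def DeutschStep (s : ℤ) : Prop := s = 1 ∨ ∃ j : ℕ, s = -(2 * j + 1)

/-- A Deutsch path: all steps are Deutsch steps and all partial sums (heights)
are nonnegative. -/
def IsDeutschPath (p : List ℤ) : Prop :=
  (∀ s ∈ p, DeutschStep s) ∧ ∀ m : ℕ, 0 ≤ (p.take m).sum

/-- Number of Deutsch paths from (0,0) to (n,k). -/
noncomputable def deutschCount (n k : ℕ) : ℕ :=
  Nat.card {p : List ℤ // p.length = n ∧ IsDeutschPath p ∧ p.sum = (k : ℤ)}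

/- ============ auxiliary definitions ============ -/

def DA (n : ℕ) (k : ℤ) := {p : List ℤ // p.length = n ∧ IsDeutschPath p ∧ p.sum = k}

lemma DeutschStep.le_one {s : ℤ} (h : DeutschStep s) : s ≤ 1 := by
  rcases h with h | ⟨j, h⟩ <;> omega

lemma IsDeutschPath.sum_nonneg {p : List ℤ} (h : IsDeutschPath p) : 0 ≤ p.sum := by
  simpa using h.2 p.length

lemma IsDeutschPath.sum_le {p : List ℤ} (h : IsDeutschPath p) : p.sum ≤ p.length := by
  have := List.sum_le_card_nsmul p 1 (fun x hx => (h.1 x hx).le_one)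
  simpa using this

lemma sum_take_append (q : List ℤ) (s : ℤ) (m : ℕ) :
    ((q ++ [s]).take m).sum = (q.take m).sum + if q.length < m then s else 0 := by
  rw [List.take_append, List.sum_append]
  congr 1
  rcases lt_or_ge q.length m with h | h
  · rw [List.take_of_length_le (by simp; omega)]
    simp [h]
  · simp [Nat.sub_eq_zero_of_le h, not_lt.2 h]

lemma isDeutschPath_append {q : List ℤ} {s : ℤ} (hq : IsDeutschPath q) (hs : DeutschStep s)
    (h : 0 ≤ q.sum + s) : IsDeutschPath (q ++ [s]) := by
  constructor
  · intro x hx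
    rcases List.mem_append.1 hx with h' | h'
    · exact hq.1 x h'
    · simp at h'; subst h'; exact hs
  · intro m
    rw [sum_take_append]
    split
    · next h' =>
        rw [List.take_of_length_le h'.le]
        exact h
    · simpa using hq.2 m

lemma DA_isEmpty_of_neg (n : ℕ) (k : ℤ) (hk : k < 0) : IsEmpty (DA n k) := by
  constructor
  rintro ⟨p, _, hp, hsum⟩
  have := hp.sum_nonneg
  omega

/-- The appending map: a Deutsch path of length n+1 ending at k is a Deutsch path
of length n followed by one Deutsch step. -/
def Phi (n k : ℕ) :
    (DA n ((k : ℤ) - 1) ⊕ (Σ j : Fin (n + 1), DA n ((k : ℤ) + 2 * (j : ℤ) + 1))) →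
    DA (n + 1) (k : ℤ) :=
  Sum.elim
    (fun q => ⟨q.1 ++ [1], by simp [q.2.1],
      isDeutschPath_append q.2.2.1 (Or.inl rfl) (by rw [q.2.2.2]; omega),
      by rw [List.sum_append]; simp [q.2.2.2]⟩)
    (fun x => ⟨x.2.1 ++ [-(2 * (x.1 : ℤ) + 1)], by simp [x.2.2.1],
      isDeutschPath_append x.2.2.2.1 (Or.inr ⟨x.1, by push_cast; ring⟩)
        (by rw [x.2.2.2.2]; omega),
      by rw [List.sum_append]; rw [x.2.2.2.2]; simp⟩)

lemma Phi_bijective (n k : ℕ) : Function.Bijective (Phi n k) := by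
  constructor
  · intro a b hab
    have hv : (Phi n k a).1 = (Phi n k b).1 := congrArg Subtype.val hab
    rcases a with ⟨q, hq⟩ | ⟨j, q, hq⟩ <;> rcases b with ⟨q', hq'⟩ | ⟨j', q', hq'⟩ <;>
      dsimp [Phi] at hv
    · obtain ⟨h1, _⟩ := List.append_inj' hv rfl
      exact congrArg Sum.inl (Subtype.ext h1)
    · obtain ⟨_, h2⟩ := List.append_inj' hv rfl
      simp only [List.cons.injEq] at h2
      omega
    · obtain ⟨_, h2⟩ := List.append_inj' hv rfl
      simp only [List.cons.injEq] at h2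
      omega
    · obtain ⟨h1, h2⟩ := List.append_inj' hv rfl
      simp only [List.cons.injEq] at h2
      have hjj : j = j' := Fin.ext (by omega)
      subst hjj
      exact congrArg Sum.inr (Sigma.ext rfl (heq_of_eq (Subtype.ext h1)))
  · rintro ⟨p, hlen, hp, hsum⟩
    have hne : p ≠ [] := by intro h; subst h; simp at hlen
    set s := p.getLast hne with hsdef
    set q := p.dropLast with hqdef
    have hqp : q ++ [s] = p := List.dropLast_append_getLast hne
    have hqlen : q.length = n := by
      rw [hqdef, List.length_dropLast, hlen]
      omega
    have hq : IsDeutschPath q := by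
      constructor
      · exact fun x hx => hp.1 x ((List.dropLast_sublist p).subset hx)
      · intro m
        rcases le_or_gt m q.length with h | h
        · have := hp.2 m
          rw [← hqp, sum_take_append, if_neg (by omega)] at this
          simpa using this
        · rw [List.take_of_length_le h.le]
          have := hp.2 n
          rw [← hqp, sum_take_append, if_neg (by omega),
            List.take_of_length_le (by omega)] at this
          simpa using this
    have hs : DeutschStep s := hp.1 s (List.getLast_mem hne)
    have hqsum : q.sum + s = (k : ℤ) := by
      rw [← hqp, List.sum_append] at hsum
      simpa using hsum
    rcases hs with h1 | ⟨j, hj⟩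
    · refine ⟨Sum.inl ⟨q, hqlen, hq, by omega⟩, ?_⟩
      apply Subtype.ext
      dsimp [Phi]
      show q ++ [1] = p
      rw [← h1, hqp]
    · have hqle : q.sum ≤ (n : ℤ) := by
        have := hq.sum_le
        rwa [hqlen] at this
      have hjlt : j < n + 1 := by omega
      refine ⟨Sum.inr ⟨⟨j, hjlt⟩, ⟨q, hqlen, hq, by push_cast; omega⟩⟩, ?_⟩
      apply Subtype.ext
      dsimp [Phi]
      show q ++ [-(2 * (j : ℤ) + 1)] = p
      rw [← hj, hqp]

lemma DA_finite : ∀ (n : ℕ) (k : ℤ), Finite (DA n k) := by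
  intro n
  induction n with
  | zero =>
    intro k
    have : Subsingleton (DA 0 k) := by
      constructor
      rintro ⟨p, hp⟩ ⟨p', hp'⟩
      apply Subtype.ext
      show p = p'
      rw [List.length_eq_zero_iff.mp hp.1, List.length_eq_zero_iff.mp hp'.1]
    exact Finite.of_subsingleton
  | succ n ih =>
    intro k
    rcases lt_or_ge k 0 with h | h
    · haveI := DA_isEmpty_of_neg (n + 1) k h
      exact Finite.of_subsingleton
    · obtain ⟨m, rfl⟩ : ∃ m : ℕ, k = (m : ℤ) := ⟨k.toNat, by omega⟩
      haveI := ih ((m : ℤ) - 1)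
      haveI : ∀ j : Fin (n + 1), Finite (DA n ((m : ℤ) + 2 * (j : ℤ) + 1)) := fun j => ih _
      exact Finite.of_equiv _ (Equiv.ofBijective _ (Phi_bijective n m))

lemma my_card_sigma {ι : Type*} [Fintype ι] (f : ι → Type*) [∀ i, Finite (f i)] :
    Nat.card (Σ i, f i) = ∑ i, Nat.card (f i) := by
  letI : ∀ i, Fintype (f i) := fun i => Fintype.ofFinite _
  simp [Nat.card_eq_fintype_card, Fintype.card_sigma]

lemma DA_card_rec (n k : ℕ) :
    Nat.card (DA (n + 1) (k : ℤ)) =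
      Nat.card (DA n ((k : ℤ) - 1)) +
        ∑ j ∈ Finset.range (n + 1), Nat.card (DA n ((k : ℤ) + 2 * (j : ℤ) + 1)) := by
  haveI := DA_finite n ((k : ℤ) - 1)
  haveI : ∀ j : Fin (n + 1), Finite (DA n ((k : ℤ) + 2 * (j : ℤ) + 1)) := fun j => DA_finite n _
  rw [← Nat.card_congr (Equiv.ofBijective _ (Phi_bijective n k)), Nat.card_sum,
    my_card_sigma,
    Fin.sum_univ_eq_sum_range (fun j => Nat.card (DA n ((k : ℤ) + 2 * (j : ℤ) + 1))) (n + 1)]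

/-- Recursive count of Deutsch paths. -/
def Dd : ℕ → ℕ → ℕ
  | 0, k => if k = 0 then 1 else 0
  | n + 1, k => (if k = 0 then 0 else Dd n (k - 1)) +
      ∑ j ∈ Finset.range (n + 1), Dd n (k + 2 * j + 1)

lemma deutschCount_eq_Dd (n k : ℕ) : deutschCount n k = Dd n k := by
  induction n generalizing k with
  | zero =>
    rcases Nat.eq_zero_or_pos k with rfl | hk
    · haveI : Unique (DA 0 (0 : ℤ)) := by
        refine ⟨⟨⟨[], rfl, ⟨by simp, by simp⟩, rfl⟩⟩, ?_⟩
        rintro ⟨p, hp⟩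
        exact Subtype.ext (List.length_eq_zero_iff.mp hp.1)
      show Nat.card (DA 0 ((0 : ℕ) : ℤ)) = Dd 0 0
      rw [show ((0:ℕ):ℤ) = (0:ℤ) by norm_num]
      simp [Dd, Nat.card_unique]
    · haveI : IsEmpty (DA 0 (k : ℤ)) := by
        constructor
        rintro ⟨p, hlen, _, hsum⟩
        rw [List.length_eq_zero_iff.mp hlen] at hsum
        simp at hsum
        omega
      show Nat.card (DA 0 ((k : ℕ) : ℤ)) = Dd 0 k
      rw [Nat.card_of_isEmpty]
      simp only [Dd]
      rw [if_neg (by omega)]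
  | succ n ih =>
    show Nat.card (DA (n + 1) (k : ℤ)) = Dd (n + 1) k
    rw [DA_card_rec n k, Dd]
    congr 1
    · rcases Nat.eq_zero_or_pos k with rfl | hk
      · haveI := DA_isEmpty_of_neg n (((0:ℕ) : ℤ) - 1) (by norm_num)
        rw [Nat.card_of_isEmpty]
        simp
      · rw [if_neg (by omega), show (k : ℤ) - 1 = ((k - 1 : ℕ) : ℤ) by omega, ← ih]
        rfl
    · refine Finset.sum_congr rfl fun j hj => ?_
      rw [show (k : ℤ) + 2 * (j : ℤ) + 1 = ((k + 2 * j + 1 : ℕ) : ℤ) by push_cast; ring, ← ih]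
      rfl

/- ============ Part B: closed form ============ -/

/-- Binomial coefficient with integer (possibly negative) lower index. -/
def ch (a : ℕ) (b : ℤ) : ℤ := if 0 ≤ b then (a.choose b.toNat : ℤ) else 0

lemma ch_pascal (a : ℕ) (b : ℤ) : ch (a + 1) b = ch a b + ch a (b - 1) := by
  unfold ch
  rcases lt_trichotomy b 0 with h | h | h
  · rw [if_neg (by omega), if_neg (by omega), if_neg (by omega)]
    ring
  · subst h
    norm_num
  · rw [if_pos (by omega), if_pos (by omega), if_pos (by omega)]
    have hb : b.toNat = (b - 1).toNat + 1 := by omega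
    rw [hb, Nat.choose_succ_succ]
    push_cast
    ring

def E (n d : ℕ) : ℤ := ch (n + d + 1) (d : ℤ) - 3 * ch (n + d) ((d : ℤ) - 1)

lemma sum_E (n : ℕ) : ∀ d : ℕ,
    ∑ e ∈ Finset.range d, E n e = ch (n + d + 1) ((d : ℤ) - 1) - 3 * ch (n + d) ((d : ℤ) - 2) := by
  intro d
  induction d with
  | zero => simp [ch]
  | succ d ihd =>
    rw [Finset.sum_range_succ, ihd]
    unfold E
    have h1 : n + (d + 1) + 1 = (n + d + 1) + 1 := by ring
    have h2 : n + (d + 1) = (n + d) + 1 := by ring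
    rw [h1, h2]
    push_cast
    rw [show ((d : ℤ) + 1 - 1 : ℤ) = (d : ℤ) by ring,
      show ((d : ℤ) + 1 - 2 : ℤ) = (d : ℤ) - 1 by ring]
    rw [ch_pascal (n + d + 1) (d : ℤ), ch_pascal (n + d) ((d : ℤ) - 1)]
    rw [show ((d : ℤ) - 1 - 1 : ℤ) = (d : ℤ) - 2 by ring]
    ring

lemma choose_3d (d : ℕ) (hd : 1 ≤ d) :
    ((3 * d).choose d : ℤ) = 3 * ((3 * d - 1).choose (d - 1) : ℤ) := by
  have h := Nat.add_one_mul_choose_eq (3 * d - 1) (d - 1)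
  rw [show 3 * d - 1 + 1 = 3 * d by omega, show d - 1 + 1 = d by omega] at h
  have h2 : d * (3 * (3 * d - 1).choose (d - 1)) = d * (3 * d).choose d := by
    calc d * (3 * (3 * d - 1).choose (d - 1)) = (3 * d) * (3 * d - 1).choose (d - 1) := by ring
    _ = (3 * d).choose d * d := h
    _ = d * (3 * d).choose d := by ring
  have := Nat.eq_of_mul_eq_mul_left (by omega : 0 < d) h2
  push_cast [← this]
  ring

lemma Dd_eq : ∀ n k : ℕ,
    (Dd n k : ℤ) = if k ≤ n ∧ (n + k) % 2 = 0 then E n ((n - k) / 2) else 0 := by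
  intro n
  induction n with
  | zero =>
    intro k
    rcases Nat.eq_zero_or_pos k with rfl | hk
    · simp [Dd, E, ch]
    · rw [if_neg (by omega)]
      simp [Dd]
      omega
  | succ n ih =>
    intro k
    simp only [Dd]
    push_cast
    by_cases hA : k ≤ n + 1 ∧ (n + 1 + k) % 2 = 0
    · rw [if_pos hA]
      obtain ⟨hk, hpar⟩ := hA
      set d := (n + 1 - k) / 2 with hd
      have hdn : d ≤ n + 1 := by omega
      have hsum : ∑ j ∈ Finset.range (n + 1), ((Dd n (k + 2 * j + 1) : ℕ) : ℤ) =
          ∑ e ∈ Finset.range d, E n e := by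
        have step1 : ∀ j ∈ Finset.range (n + 1),
            ((Dd n (k + 2 * j + 1) : ℕ) : ℤ) = if j < d then E n (d - 1 - j) else 0 := by
          intro j hj
          rw [ih (k + 2 * j + 1)]
          by_cases hjd : j < d
          · rw [if_pos (by omega), if_pos hjd, show (n - (k + 2 * j + 1)) / 2 = d - 1 - j by omega]
          · rw [if_neg (by omega), if_neg hjd]
        rw [Finset.sum_congr rfl step1,
          ← Finset.sum_subset (Finset.range_subset_range.2 hdn)
            (by intro x _ hnx; simp only [Finset.mem_range] at hnx; rw [if_neg (by omega)]),
          Finset.sum_congr rfl (fun x hx => by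
            simp only [Finset.mem_range] at hx; rw [if_pos hx]),
          Finset.sum_range_reflect]
      rw [hsum, sum_E n d]
      rcases Nat.eq_zero_or_pos k with rfl | hk1
      · rw [if_pos rfl]
        have hd1 : 1 ≤ d := by omega
        have hn : n = 2 * d - 1 := by omega
        have e1 : n + d + 1 = 3 * d := by omega
        have e2 : n + d = 3 * d - 1 := by omega
        have e3 : n + 1 + d + 1 = 3 * d + 1 := by omega
        have e4 : n + 1 + d = 3 * d := by omega
        unfold E
        rw [e3, e4, e1, e2]
        have hp1 : ch (3 * d + 1) (d : ℤ) = ch (3 * d) (d : ℤ) + ch (3 * d) ((d : ℤ) - 1) :=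
          ch_pascal (3 * d) (d : ℤ)
        have hp2 : ch (3 * d) ((d : ℤ) - 1) =
            ch (3 * d - 1) ((d : ℤ) - 1) + ch (3 * d - 1) ((d : ℤ) - 1 - 1) := by
          have := ch_pascal (3 * d - 1) ((d : ℤ) - 1)
          rwa [show 3 * d - 1 + 1 = 3 * d by omega] at this
        have hch : ch (3 * d) (d : ℤ) = 3 * ch (3 * d - 1) ((d : ℤ) - 1) := by
          unfold ch
          rw [if_pos (by omega), if_pos (by omega), show ((d : ℤ)).toNat = d by omega,
            show ((d : ℤ) - 1).toNat = d - 1 by omega]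
          exact choose_3d d hd1
        rw [hp1, hch, hp2, show ((d : ℤ) - 1 - 1 : ℤ) = (d : ℤ) - 2 by ring]
        ring
      · rw [if_neg (by omega), ih (k - 1), if_pos (by omega),
          show (n - (k - 1)) / 2 = d by omega]
        unfold E
        have e1 : n + 1 + d + 1 = (n + d + 1) + 1 := by ring
        have e2 : n + 1 + d = (n + d) + 1 := by ring
        rw [e1, e2, ch_pascal (n + d + 1) (d : ℤ), ch_pascal (n + d) ((d : ℤ) - 1)]
        rw [show ((d : ℤ) - 1 - 1 : ℤ) = (d : ℤ) - 2 by ring]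
        ring
    · rw [if_neg hA]
      have h1 : (if k = 0 then (0 : ℤ) else ((Dd n (k - 1) : ℕ) : ℤ)) = 0 := by
        split
        · simp
        · next hk0 =>
            rw [ih (k - 1), if_neg (by omega)]
      have h2 : ∀ j ∈ Finset.range (n + 1), ((Dd n (k + 2 * j + 1) : ℕ) : ℤ) = 0 := by
        intro j _
        rw [ih (k + 2 * j + 1), if_neg (by omega)]
      rw [Finset.sum_congr rfl h2, h1]
      simp

/- ============ main theorem ============ -/

/-- The number of Deutsch paths from (0,0) to (2N+i, 2K+i)
(i ∈ {0,1}, K ≤ N) is C(3N-K+i+1, N-K) - 3·C(3N-K+i, N-K-1), the latter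
binomial being 0 when its lower index N-K-1 is negative. -/
theorem deutschCount_closed_form (N K i : ℕ) (hi : i ≤ 1) (hK : K ≤ N) :
    (deutschCount (2 * N + i) (2 * K + i) : ℤ) =
      ((3 * N - K + i + 1).choose (N - K) : ℤ) -
        3 * (if K + 1 ≤ N then ((3 * N - K + i).choose (N - K - 1) : ℤ) else 0) := by
  rw [deutschCount_eq_Dd, Dd_eq, if_pos (by constructor <;> omega),
    show (2 * N + i - (2 * K + i)) / 2 = N - K by omega]
  unfold E
  rw [show 2 * N + i + (N - K) + 1 = 3 * N - K + i + 1 by omega,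
    show 2 * N + i + (N - K) = 3 * N - K + i by omega]
  unfold ch
  rw [if_pos (by omega), show ((N - K : ℕ) : ℤ).toNat = N - K by omega]
  congr 1
  by_cases h : K + 1 ≤ N
  · rw [if_pos h, if_pos (by omega), show (((N - K : ℕ) : ℤ) - 1).toNat = N - K - 1 by omega]
  · rw [if_neg h, if_neg (by omega)]
end

section
/- Let t be a formal power series with z^2 = t(1-t)^2 and t = z^2 + O(z^4) (the unique such power series solution). Then the generating function f_k(z) = Σ_n a_{n,k} z^n for Deutsch paths ending at level k equals z^k / (1-t)^{k+1}. -/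
/- ### Auxiliary material -/

abbrev DPT (n k : ℕ) : Type := {p : List ℤ // p.length = n ∧ IsDeutschPath p ∧ p.sum = (k : ℤ)}

lemma deutschStep_iff {s : ℤ} : DeutschStep s ↔ (∃ m : ℤ, s = 2 * m + 1) ∧ s ≤ 1 := by
  constructor
  · rintro (rfl | ⟨j, rfl⟩)
    · exact ⟨⟨0, by ring⟩, le_refl _⟩
    · refine ⟨⟨-(j + 1 : ℤ), by ring⟩, ?_⟩
      have : (0 : ℤ) ≤ j := Int.natCast_nonneg j
      omega
  · rintro ⟨⟨m, rfl⟩, h⟩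
    rcases eq_or_lt_of_le (show m ≤ 0 by omega) with rfl | hm
    · exact Or.inl (by ring)
    · refine Or.inr ⟨(-m - 1).toNat, ?_⟩
      have h2 : ((-m - 1).toNat : ℤ) = -m - 1 := Int.toNat_of_nonneg (by omega)
      omega

lemma isDeutschPath_sum_nonneg {p : List ℤ} (hp : IsDeutschPath p) : 0 ≤ p.sum := by
  have := hp.2 p.length
  rwa [List.take_length] at this

lemma isDeutschPath_concat {q : List ℤ} {s : ℤ} :
    IsDeutschPath (q ++ [s]) ↔ IsDeutschPath q ∧ DeutschStep s ∧ 0 ≤ q.sum + s := by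
  constructor
  · rintro ⟨h1, h2⟩
    refine ⟨⟨fun x hx => h1 x (by simp [hx]), fun m => ?_⟩, h1 s (by simp), ?_⟩
    · rcases le_or_gt m q.length with hm | hm
      · have := h2 m
        rwa [List.take_append_of_le_length hm] at this
      · rw [List.take_of_length_le hm.le]
        have := h2 q.length
        rwa [List.take_append_of_le_length le_rfl, List.take_length] at this
    · have := h2 (q.length + 1)
      rwa [List.take_of_length_le (by simp), List.sum_append, List.sum_singleton] at this
  · rintro ⟨⟨h1, h2⟩, hs, hsum⟩
    refine ⟨fun x hx => ?_, fun m => ?_⟩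
    · rcases List.mem_append.mp hx with h | h
      · exact h1 x h
      · rw [List.mem_singleton] at h; exact h ▸ hs
    · rcases le_or_gt m q.length with hm | hm
      · rw [List.take_append_of_le_length hm]; exact h2 m
      · rw [List.take_of_length_le (by simp; omega), List.sum_append, List.sum_singleton]
        exact hsum

lemma mem_destruct {n : ℕ} {c : ℤ} {p : List ℤ}
    (h : p.length = n + 1 ∧ IsDeutschPath p ∧ p.sum = c) :
    ∃ q s, p = q ++ [s] ∧ q.length = n ∧ IsDeutschPath q ∧ DeutschStep s ∧ q.sum + s = c := by
  rcases List.eq_nil_or_concat p with rfl | ⟨q, s, hc⟩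
  · exact absurd h.1 (by simp)
  · rw [List.concat_eq_append] at hc
    subst hc
    obtain ⟨hq, hs, _⟩ := isDeutschPath_concat.mp h.2.1
    refine ⟨q, s, rfl, by simpa using h.1, hq, hs, ?_⟩
    have := h.2.2
    rwa [List.sum_append, List.sum_singleton] at this

lemma step_bound {p : List ℤ} (hp : IsDeutschPath p) {x : ℤ} (hx : x ∈ p) :
    -(p.length : ℤ) ≤ x ∧ x ≤ 1 := by
  obtain ⟨a, b, rfl⟩ := List.append_of_mem hx
  have hx1 : x ≤ 1 := (deutschStep_iff.mp (hp.1 x (by simp))).2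
  have ha : a.sum ≤ (a.length : ℤ) := by
    have := List.sum_le_card_nsmul a 1
      (fun y hy => (deutschStep_iff.mp (hp.1 y (by simp [hy]))).2)
    simpa using this
  have h0 := hp.2 (a.length + 1)
  rw [List.take_append] at h0
  simp only [List.take_of_length_le (le_of_lt (Nat.lt_succ_self _)),
    Nat.add_sub_cancel_left, List.sum_append] at h0
  rw [show List.take 1 (x :: b) = [x] from rfl, List.sum_singleton] at h0
  refine ⟨?_, hx1⟩
  have hb : (0 : ℤ) ≤ b.length := Int.natCast_nonneg _
  have hl : ((a ++ x :: b).length : ℤ) = a.length + 1 + b.length := by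
    simp [List.length_append]; ring
  rw [hl]
  linarith

instance DPT.finite (n k : ℕ) : Finite (DPT n k) := by
  have key : ∀ (p : DPT n k) (i : Fin n), i.1 < p.1.length := fun p i => by
    rw [p.2.1]; exact i.2
  have hb : ∀ (p : DPT n k) (i : Fin n),
      p.1.get ⟨i.1, key p i⟩ ∈ Finset.Icc (-(n : ℤ)) 1 := by
    intro p i
    have hmem : p.1.get ⟨i.1, key p i⟩ ∈ p.1 := List.get_mem _ _
    have hsb := step_bound p.2.2.1 hmem
    refine Finset.mem_Icc.mpr ⟨le_trans (le_of_eq (by rw [p.2.1])) hsb.1, hsb.2⟩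
  apply Finite.of_injective
    (fun p : DPT n k => fun i : Fin n =>
      (⟨p.1.get ⟨i.1, key p i⟩, hb p i⟩ : Finset.Icc (-(n : ℤ)) 1))
  intro p q h
  apply Subtype.ext
  apply List.ext_get (by rw [p.2.1, q.2.1])
  intro i h1 h2
  have h3 := congrArg Subtype.val (congrFun h ⟨i, by rw [← p.2.1]; exact h1⟩)
  simpa using h3

lemma deutschCount_zero (k : ℕ) : deutschCount 0 k = if k = 0 then 1 else 0 := by
  rcases eq_or_ne k 0 with rfl | hk
  · rw [if_pos rfl]
    have : Unique (DPT 0 0) :=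
      { default := ⟨[], rfl, ⟨by simp, fun m => by simp⟩, by simp⟩
        uniq := fun p => Subtype.ext (List.length_eq_zero_iff.mp p.2.1) }
    exact Nat.card_unique
  · rw [if_neg hk]
    have : IsEmpty (DPT 0 k) := ⟨fun p => by
      have h0 := List.length_eq_zero_iff.mp p.2.1
      have h1 := p.2.2.2
      rw [h0] at h1
      simp only [List.sum_nil] at h1
      exact hk (by exact_mod_cast h1.symm)⟩
    exact Nat.card_of_isEmpty

lemma deutschCount_eq_zero_of_lt {n k : ℕ} (h : n < k) : deutschCount n k = 0 := by
  have : IsEmpty (DPT n k) := ⟨fun p => by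
    obtain ⟨hl, hdp, hsum⟩ := p.2
    have hle : p.1.sum ≤ (p.1.length : ℤ) := by
      have := List.sum_le_card_nsmul p.1 1
        (fun y hy => (deutschStep_iff.mp (hdp.1 y hy)).2)
      simpa using this
    rw [hsum, hl] at hle
    have : (n : ℤ) < (k : ℤ) := by exact_mod_cast h
    omega⟩
  exact Nat.card_of_isEmpty

/-- Bijection: paths of length `n+1` to height `k+1` are paths to `k` of length `n`
followed by an up-step, or paths of length `n+1` to `k+3` with last step decreased by 2. -/
def lastEquiv (n k : ℕ) : (DPT n k ⊕ DPT (n + 1) (k + 3)) ≃ DPT (n + 1) (k + 1) where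
  toFun x :=
    match x with
    | Sum.inl ⟨q, hq⟩ => ⟨q ++ [1], by
        obtain ⟨h1, h2, h3⟩ := hq
        refine ⟨by simp [h1], isDeutschPath_concat.mpr ⟨h2, Or.inl rfl, ?_⟩, ?_⟩
        · rw [h3]; positivity
        · rw [List.sum_append, List.sum_singleton, h3]; push_cast; ring⟩
    | Sum.inr ⟨r, hr⟩ => ⟨r.dropLast ++ [r.getLastD 0 - 2], by
        obtain ⟨q, s, rfl, hq, hdp, hs, hsum⟩ := mem_destruct hr
        rw [List.dropLast_concat, List.getLastD_concat]
        obtain ⟨⟨m, rfl⟩, hle⟩ := deutschStep_iff.mp hs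
        push_cast at hsum
        refine ⟨by simp [hq], isDeutschPath_concat.mpr ⟨hdp, ?_, by omega⟩, ?_⟩
        · exact deutschStep_iff.mpr ⟨⟨m - 1, by ring⟩, by omega⟩
        · rw [List.sum_append, List.sum_singleton]; push_cast; omega⟩
  invFun p :=
    if hone : p.1.getLastD 0 = 1 then
      Sum.inl ⟨p.1.dropLast, by
        obtain ⟨q, s, hp, hq, hdp, hs, hsum⟩ := mem_destruct p.2
        rw [hp, List.getLastD_concat] at hone
        subst hone
        rw [hp, List.dropLast_concat]
        push_cast at hsum
        exact ⟨hq, hdp, by omega⟩⟩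
    else
      Sum.inr ⟨p.1.dropLast ++ [p.1.getLastD 0 + 2], by
        obtain ⟨q, s, hp, hq, hdp, hs, hsum⟩ := mem_destruct p.2
        rw [hp, List.getLastD_concat] at hone
        rw [hp, List.dropLast_concat, List.getLastD_concat]
        obtain ⟨⟨m, rfl⟩, hle⟩ := deutschStep_iff.mp hs
        push_cast at hsum
        refine ⟨by simp [hq], isDeutschPath_concat.mpr ⟨hdp, ?_, by omega⟩, ?_⟩
        · exact deutschStep_iff.mpr ⟨⟨m + 1, by ring⟩, by omega⟩
        · rw [List.sum_append, List.sum_singleton]; push_cast; omega⟩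
  left_inv x := by
    rcases x with ⟨q, hq⟩ | ⟨r, hr⟩
    · dsimp only
      rw [dif_pos (by rw [List.getLastD_concat])]
      congr 1
      exact Subtype.ext (by show (q ++ [1]).dropLast = q; rw [List.dropLast_concat])
    · dsimp only
      obtain ⟨q, s, rfl, hq, hdp, hs, hsum⟩ := mem_destruct hr
      have hne : (q ++ [s]).dropLast ++ [(q ++ [s]).getLastD 0 - 2] = q ++ [s - 2] := by
        rw [List.dropLast_concat, List.getLastD_concat]
      have hlast : ((q ++ [s]).dropLast ++ [(q ++ [s]).getLastD 0 - 2]).getLastD 0 = s - 2 := by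
        rw [hne, List.getLastD_concat]
      rw [dif_neg (by
        rw [hlast]
        have := (deutschStep_iff.mp hs).2
        omega)]
      congr 1
      apply Subtype.ext
      show ((q ++ [s]).dropLast ++ [(q ++ [s]).getLastD 0 - 2]).dropLast ++
        [((q ++ [s]).dropLast ++ [(q ++ [s]).getLastD 0 - 2]).getLastD 0 + 2] = q ++ [s]
      rw [hne, List.dropLast_concat, List.getLastD_concat]
      norm_num
  right_inv p := by
    dsimp only
    obtain ⟨q, s, hp, hq, hdp, hs, hsum⟩ := mem_destruct p.2
    by_cases hone : p.1.getLastD 0 = 1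
    · rw [dif_pos hone]
      apply Subtype.ext
      show p.1.dropLast ++ [1] = p.1
      rw [hp, List.getLastD_concat] at hone
      rw [hp, List.dropLast_concat, hone]
    · rw [dif_neg hone]
      apply Subtype.ext
      show (p.1.dropLast ++ [p.1.getLastD 0 + 2]).dropLast ++
        [(p.1.dropLast ++ [p.1.getLastD 0 + 2]).getLastD 0 - 2] = p.1
      rw [List.dropLast_concat, List.getLastD_concat]
      rw [hp, List.dropLast_concat, List.getLastD_concat]
      norm_num

/-- Bijection: paths of length `n+1` to height `0` correspond to paths of length `n+1`
to height `2` (last step shifted by 2; a positive-length path to 0 cannot end with an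
up-step). -/
def lastEquiv0 (n : ℕ) : DPT (n + 1) 2 ≃ DPT (n + 1) 0 where
  toFun r := ⟨r.1.dropLast ++ [r.1.getLastD 0 - 2], by
    obtain ⟨q, s, hp, hq, hdp, hs, hsum⟩ := mem_destruct r.2
    rw [hp, List.dropLast_concat, List.getLastD_concat]
    obtain ⟨⟨m, rfl⟩, hle⟩ := deutschStep_iff.mp hs
    push_cast at hsum
    refine ⟨by simp [hq], isDeutschPath_concat.mpr ⟨hdp, ?_, by omega⟩, ?_⟩
    · exact deutschStep_iff.mpr ⟨⟨m - 1, by ring⟩, by omega⟩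
    · rw [List.sum_append, List.sum_singleton]; push_cast; omega⟩
  invFun p := ⟨p.1.dropLast ++ [p.1.getLastD 0 + 2], by
    obtain ⟨q, s, hp, hq, hdp, hs, hsum⟩ := mem_destruct p.2
    rw [hp, List.dropLast_concat, List.getLastD_concat]
    obtain ⟨⟨m, rfl⟩, hle⟩ := deutschStep_iff.mp hs
    push_cast at hsum
    have hq0 : 0 ≤ q.sum := isDeutschPath_sum_nonneg hdp
    have hm : m ≤ -1 := by omega
    refine ⟨by simp [hq], isDeutschPath_concat.mpr ⟨hdp, ?_, by omega⟩, ?_⟩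
    · exact deutschStep_iff.mpr ⟨⟨m + 1, by ring⟩, by omega⟩
    · rw [List.sum_append, List.sum_singleton]; push_cast; omega⟩
  left_inv r := by
    obtain ⟨q, s, hp, hq, hdp, hs, hsum⟩ := mem_destruct r.2
    apply Subtype.ext
    show (r.1.dropLast ++ [r.1.getLastD 0 - 2]).dropLast ++
      [(r.1.dropLast ++ [r.1.getLastD 0 - 2]).getLastD 0 + 2] = r.1
    rw [List.dropLast_concat, List.getLastD_concat]
    rw [hp, List.dropLast_concat, List.getLastD_concat,
      show s - 2 + 2 = s from by ring]
  right_inv p := by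
    obtain ⟨q, s, hp, hq, hdp, hs, hsum⟩ := mem_destruct p.2
    apply Subtype.ext
    show (p.1.dropLast ++ [p.1.getLastD 0 + 2]).dropLast ++
      [(p.1.dropLast ++ [p.1.getLastD 0 + 2]).getLastD 0 - 2] = p.1
    rw [List.dropLast_concat, List.getLastD_concat]
    rw [hp, List.dropLast_concat, List.getLastD_concat]
    norm_num

lemma deutschCount_succ_succ (n k : ℕ) :
    deutschCount (n + 1) (k + 1) = deutschCount n k + deutschCount (n + 1) (k + 3) :=
  calc deutschCount (n + 1) (k + 1)
      = Nat.card (DPT n k ⊕ DPT (n + 1) (k + 3)) := (Nat.card_congr (lastEquiv n k)).symm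
    _ = deutschCount n k + deutschCount (n + 1) (k + 3) := Nat.card_sum

lemma deutschCount_succ_zero (n : ℕ) : deutschCount (n + 1) 0 = deutschCount (n + 1) 2 :=
  Nat.card_congr (lastEquiv0 n).symm

lemma dvd_of_dvd_unit_mul {R : Type*} [CommRing R] {a b c : R} (hu : IsUnit a)
    (h : c ∣ a * b) : c ∣ b := by
  obtain ⟨v, rfl⟩ := hu
  obtain ⟨w, hw⟩ := h
  refine ⟨(↑v⁻¹ : R) * w, ?_⟩
  calc b = (↑v⁻¹ : R) * ((v : R) * b) := by rw [← mul_assoc, Units.inv_mul, one_mul]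
    _ = c * ((↑v⁻¹ : R) * w) := by rw [hw]; ring

/-- With t the formal power series solution of t(1-t)² = z²,
t(0) = 0 (the unique such solution, t = z² + O(z⁴)), the generating function
f_k(z) = Σₙ aₙ,ₖ zⁿ of Deutsch paths ending at level k equals zᵏ/(1-t)ᵏ⁺¹;
equivalently f_k · (1-t)ᵏ⁺¹ = zᵏ. -/
theorem deutschCount_generating_function (t : PowerSeries ℚ)
    (ht : t * (1 - t) ^ 2 = PowerSeries.X ^ 2)
    (ht0 : PowerSeries.constantCoeff t = 0) :
    ∀ k : ℕ,
      (PowerSeries.mk fun n => (deutschCount n k : ℚ)) * (1 - t) ^ (k + 1) =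
        PowerSeries.X ^ k := by
  classical
  set F : ℕ → PowerSeries ℚ := fun k => PowerSeries.mk fun n => (deutschCount n k : ℚ)
    with hF
  have hu : IsUnit ((1 : PowerSeries ℚ) - t) := by
    rw [PowerSeries.isUnit_iff_constantCoeff]
    simp [ht0]
  have hF0 : F 0 = 1 + F 2 := by
    ext n
    simp only [hF, PowerSeries.coeff_mk, map_add, PowerSeries.coeff_one]
    cases n with
    | zero => simp [deutschCount_zero]
    | succ m =>
      rw [deutschCount_succ_zero m]
      simp
  have hFrec : ∀ k, F (k + 1) = PowerSeries.X * F k + F (k + 3) := by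
    intro k
    ext n
    simp only [hF, PowerSeries.coeff_mk, map_add]
    cases n with
    | zero =>
      simp [deutschCount_zero, PowerSeries.coeff_zero_eq_constantCoeff]
    | succ m =>
      rw [PowerSeries.coeff_succ_X_mul, PowerSeries.coeff_mk, deutschCount_succ_succ m k]
      push_cast
      ring
  have hFdvd : ∀ k, (PowerSeries.X ^ k : PowerSeries ℚ) ∣ F k := by
    intro k
    rw [PowerSeries.X_pow_dvd_iff]
    intro m hm
    simp [hF, deutschCount_eq_zero_of_lt hm]
  set g : ℕ → PowerSeries ℚ :=
    fun k => F k * (1 - t) ^ (k + 1) - PowerSeries.X ^ k with hg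
  have hg0 : (1 - t) ^ 2 * g 0 = g 2 := by
    simp only [hg]
    linear_combination ((1 : PowerSeries ℚ) - t) ^ 3 * hF0 - ht
  have hgrec : ∀ k, (1 - t) ^ 2 * g (k + 1) =
      PowerSeries.X * (1 - t) ^ 3 * g k + g (k + 3) := by
    intro k
    simp only [hg]
    linear_combination ((1 : PowerSeries ℚ) - t) ^ (k + 4) * hFrec k -
      (PowerSeries.X : PowerSeries ℚ) ^ (k + 1) * ht
  have hQ : ∀ d k, (PowerSeries.X ^ (k + d) : PowerSeries ℚ) ∣ g k := by
    intro d
    induction d with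
    | zero =>
      intro k
      simp only [hg]
      exact dvd_sub ((hFdvd k).mul_right _) dvd_rfl
    | succ d ih =>
      intro k
      induction k with
      | zero =>
        refine dvd_of_dvd_unit_mul (hu.pow 2) ?_
        rw [hg0]
        exact (pow_dvd_pow _ (by omega)).trans (ih 2)
      | succ k ihk =>
        refine dvd_of_dvd_unit_mul (hu.pow 2) ?_
        rw [hgrec k]
        refine dvd_add ?_ ((pow_dvd_pow _ (by omega)).trans (ih (k + 3)))
        rw [show k + 1 + (d + 1) = (k + (d + 1)) + 1 from by omega, pow_succ', mul_assoc]
        exact mul_dvd_mul dvd_rfl (ihk.mul_left _)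
  have hgzero : ∀ k, g k = 0 := by
    intro k
    ext n
    have hd : (PowerSeries.X : PowerSeries ℚ) ^ (n + 1) ∣ g k :=
      (pow_dvd_pow _ (show n + 1 ≤ k + (n + 1) by omega)).trans (hQ (n + 1) k)
    rw [map_zero]
    exact PowerSeries.X_pow_dvd_iff.mp hd n (by omega)
  intro k
  have h := hgzero k
  simp only [hg, hF] at h
  exact sub_eq_zero.mp h
end

section
/- For any elements X, Y of a commutative ring and any m ≥ 0 (Girard–Waring formula): X^m + Y^m = Σ_{0 ≤ k ≤ m/2} (-1)^k · C(m-k, k) · (m/(m-k)) · (XY)^k · (X+Y)^{m-2k}, where for m ≥ 1 the coefficient C(m-k,k)·m/(m-k) is an integer. -/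
open Finset

/-- Girard–Waring coefficient: `D m k = C(m-k,k)·m/(m-k)`. -/
def gwD (m k : ℕ) : ℕ :=
  match k with
  | 0 => 1
  | k+1 => (m - (k+1)).choose (k+1) + (m - (k+1) - 1).choose k

lemma gwD_zero (m : ℕ) : gwD m 0 = 1 := rfl

lemma gwD_succ (m k : ℕ) :
    gwD m (k+1) = (m - (k+1)).choose (k+1) + (m - (k+1) - 1).choose k := rfl

lemma gwD_mul (m k : ℕ) (hm : 1 ≤ m) (hk : k ≤ m / 2) :
    m * (m - k).choose k = (m - k) * gwD m k := by
  cases k with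
  | zero => simp [gwD_zero]
  | succ k =>
    have ha : 1 ≤ m - (k+1) := by omega
    set a := m - (k+1) with hadef
    have h2 : a - 1 + 1 = a := by omega
    have h3 : (a - 1 + 1) * (a-1).choose k = (a-1+1).choose (k+1) * (k+1) :=
      Nat.add_one_mul_choose_eq (a-1) k
    rw [h2] at h3
    have hm' : m = a + (k+1) := by omega
    rw [gwD_succ, ← hadef]
    calc m * a.choose (k+1) = a * a.choose (k+1) + (k+1) * a.choose (k+1) := by
          rw [hm']; ring
      _ = a * a.choose (k+1) + a * (a-1).choose k := by rw [h3]; ring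
      _ = a * (a.choose (k+1) + (a-1).choose k) := by ring

lemma gwD_eq_zero (m k : ℕ) (h2 : 2 ≤ k) (h : m < 2*k) : gwD m k = 0 := by
  obtain ⟨s, rfl⟩ : ∃ s, k = s + 2 := ⟨k - 2, by omega⟩
  rw [gwD_succ]
  rw [Nat.choose_eq_zero_of_lt (by omega), Nat.choose_eq_zero_of_lt (by omega)]

lemma gwD_rec (a k : ℕ) (h : 2*k ≤ a+1) :
    gwD (a+3) (k+1) = gwD (a+2) (k+1) + gwD (a+1) k := by
  cases k with
  | zero =>
    simp only [gwD_succ, gwD_zero, zero_add, Nat.choose_one_right, Nat.choose_zero_right]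
    omega
  | succ s =>
    have h1 : a + 3 - (s+2) = (a - s - 1) + 1 + 1 := by omega
    have h2 : a + 3 - (s+2) - 1 = (a - s - 1) + 1 := by omega
    have h3 : a + 2 - (s+2) = (a - s - 1) + 1 := by omega
    have h4 : a + 2 - (s+2) - 1 = a - s - 1 := by omega
    have h5 : a + 1 - (s+1) = (a - s - 1) + 1 := by omega
    have h6 : a + 1 - (s+1) - 1 = a - s - 1 := by omega
    rw [gwD_succ, gwD_succ, gwD_succ, h2, h1, h4, h3, h6, h5,
      Nat.choose_succ_succ ((a - s - 1) + 1) (s+1),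
      Nat.choose_succ_succ (a - s - 1) s]
    simp only [Nat.succ_eq_add_one]
    omega

lemma gw_step {R : Type*} [CommRing R] (X Y : R) (a : ℕ)
    (h1 : X ^ (a+2) + Y ^ (a+2) =
      ∑ k ∈ range ((a+2)/2+1),
        (-1 : R) ^ k * (gwD (a+2) k : R) * (X*Y)^k * (X+Y)^((a+2) - 2*k))
    (h2 : X ^ (a+1) + Y ^ (a+1) =
      ∑ k ∈ range ((a+1)/2+1),
        (-1 : R) ^ k * (gwD (a+1) k : R) * (X*Y)^k * (X+Y)^((a+1) - 2*k)) :
    X ^ (a+3) + Y ^ (a+3) =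
      ∑ k ∈ range ((a+3)/2+1),
        (-1 : R) ^ k * (gwD (a+3) k : R) * (X*Y)^k * (X+Y)^((a+3) - 2*k) := by
  have e1 : X ^ (a+3) + Y ^ (a+3) =
      (X+Y) * (X ^ (a+2) + Y ^ (a+2)) - X*Y * (X ^ (a+1) + Y ^ (a+1)) := by
    ring
  rw [e1, h1, h2, Finset.mul_sum, Finset.mul_sum]
  have hG : ∀ k ∈ range ((a+2)/2+1),
      (X+Y) * ((-1 : R) ^ k * (gwD (a+2) k : R) * (X*Y)^k * (X+Y)^((a+2) - 2*k))
      = (-1 : R) ^ k * (gwD (a+2) k : R) * (X*Y)^k * (X+Y)^((a+3) - 2*k) := by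
    intro k hk
    simp only [mem_range] at hk
    have h : a+3-2*k = (a+2-2*k)+1 := by omega
    rw [h, pow_succ]; ring
  rw [Finset.sum_congr rfl hG]
  have hsub : ∑ k ∈ range ((a+2)/2+1),
      (-1 : R) ^ k * (gwD (a+2) k : R) * (X*Y)^k * (X+Y)^((a+3) - 2*k)
      = ∑ k ∈ range ((a+3)/2+1),
      (-1 : R) ^ k * (gwD (a+2) k : R) * (X*Y)^k * (X+Y)^((a+3) - 2*k) := by
    apply Finset.sum_subset
    · intro x hx; simp only [mem_range] at *; omega
    · intro k hk hnk
      simp only [mem_range] at hk hnk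
      rw [gwD_eq_zero (a+2) k (by omega) (by omega)]
      simp
  rw [hsub]
  have hH : ∀ k ∈ range ((a+1)/2+1),
      (X*Y) * ((-1 : R) ^ k * (gwD (a+1) k : R) * (X*Y)^k * (X+Y)^((a+1) - 2*k))
      = (-1 : R) ^ k * (gwD (a+1) k : R) * (X*Y)^(k+1) * (X+Y)^((a+1) - 2*k) := by
    intro k hk; rw [pow_succ]; ring
  rw [Finset.sum_congr rfl hH]
  have hrange : (a+1)/2 + 1 = (a+3)/2 := by omega
  rw [hrange]
  rw [Finset.sum_range_succ' (fun k => (-1 : R) ^ k * (gwD (a+3) k : R) * (X*Y)^k * (X+Y)^((a+3) - 2*k)) ((a+3)/2)]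
  rw [Finset.sum_range_succ' (fun k => (-1 : R) ^ k * (gwD (a+2) k : R) * (X*Y)^k * (X+Y)^((a+3) - 2*k)) ((a+3)/2)]
  have hterm : ∀ k ∈ range ((a+3)/2),
      (-1 : R) ^ (k+1) * (gwD (a+3) (k+1) : R) * (X*Y)^(k+1) * (X+Y)^((a+3) - 2*(k+1))
      = ((-1 : R) ^ (k+1) * (gwD (a+2) (k+1) : R) * (X*Y)^(k+1) * (X+Y)^((a+3) - 2*(k+1))
        - (-1 : R) ^ k * (gwD (a+1) k : R) * (X*Y)^(k+1) * (X+Y)^((a+1) - 2*k)) := by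
    intro k hk
    simp only [mem_range] at hk
    have he : (a+1) - 2*k = (a+3) - 2*(k+1) := by omega
    rw [he, gwD_rec a k (by omega)]
    push_cast
    ring
  rw [Finset.sum_congr rfl hterm, Finset.sum_sub_distrib]
  simp only [gwD_zero, Nat.cast_one, pow_zero, mul_one, one_mul, Nat.sub_zero, Nat.mul_zero]
  ring

lemma gw_key {R : Type*} [CommRing R] (X Y : R) (n : ℕ) :
    (X ^ (n+1) + Y ^ (n+1) =
      ∑ k ∈ range ((n+1)/2+1),
        (-1 : R) ^ k * (gwD (n+1) k : R) * (X*Y)^k * (X+Y)^((n+1) - 2*k))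
    ∧ (X ^ (n+2) + Y ^ (n+2) =
      ∑ k ∈ range ((n+2)/2+1),
        (-1 : R) ^ k * (gwD (n+2) k : R) * (X*Y)^k * (X+Y)^((n+2) - 2*k)) := by
  induction n with
  | zero =>
    constructor
    · norm_num [Finset.sum_range_succ, gwD_zero]
    · norm_num [Finset.sum_range_succ, gwD_zero, gwD_succ]
      ring
  | succ n ih =>
    refine ⟨ih.2, ?_⟩
    have := gw_step X Y n ih.2 ih.1
    convert this using 2

/-- Girard–Waring: For X, Y in a commutative ring and m ≥ 1,
Xᵐ + Yᵐ = Σ_{0 ≤ k ≤ m/2} (-1)ᵏ C(m-k, k)·(m/(m-k))·(XY)ᵏ(X+Y)^{m-2k},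
where each coefficient C(m-k,k)·m/(m-k) is an integer, i.e.
(m-k) ∣ m·C(m-k,k) for k ≤ m/2. -/
theorem girard_waring_power_sum {R : Type*} [CommRing R] (X Y : R) (m : ℕ)
    (hm : 1 ≤ m) :
    (∀ k ≤ m / 2, (m - k) ∣ m * (m - k).choose k) ∧
      X ^ m + Y ^ m =
        ∑ k ∈ Finset.range (m / 2 + 1),
          (-1 : R) ^ k * ((m * (m - k).choose k / (m - k) : ℕ) : R) *
            (X * Y) ^ k * (X + Y) ^ (m - 2 * k) := by
  constructor
  · intro k hk
    exact ⟨gwD m k, gwD_mul m k hm hk⟩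
  · obtain ⟨n, rfl⟩ : ∃ n, m = n + 1 := ⟨m - 1, by omega⟩
    rw [(gw_key X Y n).1]
    apply Finset.sum_congr rfl
    intro k hk
    simp only [mem_range] at hk
    rw [gwD_mul (n+1) k hm (by omega), Nat.mul_div_cancel_left _ (by omega : 0 < n+1-k)]
end

section
/- For any elements X, Y of a commutative ring and any m ≥ 1: (X^m - Y^m)/(X - Y) = Σ_{0 ≤ k ≤ (m-1)/2} (-1)^k · C(m-1-k, k) · (XY)^k · (X+Y)^{m-1-2k}, where the left side is interpreted as the polynomial Σ_{j=0}^{m-1} X^j Y^{m-1-j}. -/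
open Finset

private def Lf {R : Type*} [CommRing R] (X Y : R) (m : ℕ) : R :=
  ∑ j ∈ range m, X ^ j * Y ^ (m - 1 - j)

private def Gf {R : Type*} [CommRing R] (X Y : R) (m : ℕ) : R :=
  ∑ k ∈ range m,
    (-1 : R) ^ k * ((m - 1 - k).choose k : R) * (X * Y) ^ k * (X + Y) ^ (m - 1 - 2 * k)

private lemma Lf_rec {R : Type*} [CommRing R] (X Y : R) (m : ℕ) :
    Lf X Y (m + 2) = (X + Y) * Lf X Y (m + 1) - X * Y * Lf X Y m := by
  show ∑ j ∈ range (m + 2), X ^ j * Y ^ (m + 1 - j) =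
      (X + Y) * ∑ j ∈ range (m + 1), X ^ j * Y ^ (m - j)
        - X * Y * ∑ j ∈ range m, X ^ j * Y ^ (m - 1 - j)
  have h1 : Y * ∑ j ∈ range (m + 1), X ^ j * Y ^ (m - j)
      = ∑ j ∈ range (m + 1), X ^ j * Y ^ (m + 1 - j) := by
    rw [Finset.mul_sum]
    refine Finset.sum_congr rfl fun j hj => ?_
    have hj' := Finset.mem_range.mp hj
    rw [show m + 1 - j = (m - j) + 1 by omega, pow_succ]
    ring
  have h2 : X * ∑ j ∈ range (m + 1), X ^ j * Y ^ (m - j)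
      = (∑ j ∈ range m, X ^ (j + 1) * Y ^ (m - j)) + X ^ (m + 1) := by
    rw [Finset.mul_sum, Finset.sum_range_succ, Nat.sub_self, pow_zero, mul_one,
      ← pow_succ']
    congr 1
    refine Finset.sum_congr rfl fun j hj => ?_
    ring
  have h3 : X * Y * ∑ j ∈ range m, X ^ j * Y ^ (m - 1 - j)
      = ∑ j ∈ range m, X ^ (j + 1) * Y ^ (m - j) := by
    rw [Finset.mul_sum]
    refine Finset.sum_congr rfl fun j hj => ?_
    have hj' := Finset.mem_range.mp hj
    rw [show m - j = (m - 1 - j) + 1 by omega, pow_succ]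
    ring
  rw [Finset.sum_range_succ, Nat.sub_self, pow_zero, mul_one]
  linear_combination -h1 - h2 + h3

private lemma Gf_rec {R : Type*} [CommRing R] (X Y : R) (m : ℕ) :
    Gf X Y (m + 2) = (X + Y) * Gf X Y (m + 1) - X * Y * Gf X Y m := by
  show ∑ k ∈ range (m + 2),
        (-1 : R) ^ k * ((m + 1 - k).choose k : R) * (X * Y) ^ k * (X + Y) ^ (m + 1 - 2 * k)
      = (X + Y) * ∑ k ∈ range (m + 1),
          (-1 : R) ^ k * ((m - k).choose k : R) * (X * Y) ^ k * (X + Y) ^ (m - 2 * k)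
        - X * Y * ∑ k ∈ range m,
          (-1 : R) ^ k * ((m - 1 - k).choose k : R) * (X * Y) ^ k * (X + Y) ^ (m - 1 - 2 * k)
  have hA : (X + Y) * ∑ k ∈ range (m + 1),
        (-1 : R) ^ k * ((m - k).choose k : R) * (X * Y) ^ k * (X + Y) ^ (m - 2 * k)
      = ∑ k ∈ range (m + 1),
        (-1 : R) ^ k * ((m - k).choose k : R) * (X * Y) ^ k * (X + Y) ^ (m + 1 - 2 * k) := by
    rw [Finset.mul_sum]
    refine Finset.sum_congr rfl fun k hk => ?_
    by_cases h2k : 2 * k ≤ m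
    · rw [show m + 1 - 2 * k = (m - 2 * k) + 1 by omega, pow_succ]
      ring
    · rw [Nat.choose_eq_zero_of_lt (by omega : m - k < k)]
      push_cast
      ring
  have hB : X * Y * ∑ k ∈ range m,
        (-1 : R) ^ k * ((m - 1 - k).choose k : R) * (X * Y) ^ k * (X + Y) ^ (m - 1 - 2 * k)
      = ∑ k ∈ range m,
        (-1 : R) ^ k * ((m - 1 - k).choose k : R) * (X * Y) ^ (k + 1)
          * (X + Y) ^ (m + 1 - 2 * (k + 1)) := by
    rw [Finset.mul_sum]
    refine Finset.sum_congr rfl fun k hk => ?_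
    rw [show m + 1 - 2 * (k + 1) = m - 1 - 2 * k by omega, pow_succ]
    ring
  rw [hA, hB, Finset.sum_range_succ' _ (m + 1), Finset.sum_range_succ,
    Finset.sum_range_succ' _ m]
  have hzero : ((m + 1 - (m + 1)).choose (m + 1) : R) = 0 := by
    rw [Nat.choose_eq_zero_of_lt (by omega)]
    push_cast
    ring
  rw [hzero]
  have hmain : ∀ k ∈ range m,
      (-1 : R) ^ (k + 1) * ((m + 1 - (k + 1)).choose (k + 1) : R) * (X * Y) ^ (k + 1)
          * (X + Y) ^ (m + 1 - 2 * (k + 1))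
      = (-1 : R) ^ (k + 1) * ((m - (k + 1)).choose (k + 1) : R) * (X * Y) ^ (k + 1)
          * (X + Y) ^ (m + 1 - 2 * (k + 1))
        - (-1 : R) ^ k * ((m - 1 - k).choose k : R) * (X * Y) ^ (k + 1)
          * (X + Y) ^ (m + 1 - 2 * (k + 1)) := by
    intro k hk
    have hk' := Finset.mem_range.mp hk
    rw [show m + 1 - (k + 1) = (m - 1 - k) + 1 by omega,
      show m - (k + 1) = m - 1 - k by omega, Nat.choose_succ_succ]
    push_cast
    ring
  rw [Finset.sum_congr rfl hmain, Finset.sum_sub_distrib]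
  simp only [Nat.choose_zero_right, Nat.cast_one, pow_zero, one_mul, mul_one, mul_zero,
    zero_mul, Nat.cast_ofNat]
  ring

private lemma Lf_eq_Gf {R : Type*} [CommRing R] (X Y : R) (n : ℕ) :
    Lf X Y n = Gf X Y n := by
  have H : ∀ n, Lf X Y n = Gf X Y n ∧ Lf X Y (n + 1) = Gf X Y (n + 1) := by
    intro n
    induction n with
    | zero => constructor <;> simp [Lf, Gf]
    | succ n ih => exact ⟨ih.2, by rw [Lf_rec, Gf_rec, ih.1, ih.2]⟩
  exact (H n).1


/-- Girard–Waring, second form: For X, Y in a commutative ring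
and m ≥ 1, (Xᵐ - Yᵐ)/(X - Y), interpreted as Σ_{j=0}^{m-1} Xʲ Y^{m-1-j},
equals Σ_{0 ≤ k ≤ (m-1)/2} (-1)ᵏ C(m-1-k, k) (XY)ᵏ (X+Y)^{m-1-2k}. -/
theorem girard_waring_quotient {R : Type*} [CommRing R] (X Y : R) (m : ℕ)
    (hm : 1 ≤ m) :
    ∑ j ∈ Finset.range m, X ^ j * Y ^ (m - 1 - j) =
      ∑ k ∈ Finset.range ((m - 1) / 2 + 1),
        (-1 : R) ^ k * ((m - 1 - k).choose k : R) *
          (X * Y) ^ k * (X + Y) ^ (m - 1 - 2 * k) := by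
  have hext : ∑ k ∈ Finset.range ((m - 1) / 2 + 1),
        (-1 : R) ^ k * ((m - 1 - k).choose k : R) *
          (X * Y) ^ k * (X + Y) ^ (m - 1 - 2 * k)
      = ∑ k ∈ Finset.range m,
        (-1 : R) ^ k * ((m - 1 - k).choose k : R) *
          (X * Y) ^ k * (X + Y) ^ (m - 1 - 2 * k) := by
    refine Finset.sum_subset (Finset.range_subset_range.mpr (by omega)) fun k hk hk' => ?_
    have h1 : (m - 1) / 2 + 1 ≤ k := by
      by_contra h
      exact hk' (Finset.mem_range.mpr (by omega))
    rw [Nat.choose_eq_zero_of_lt (by omega : m - 1 - k < k)]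
    push_cast
    ring
  rw [hext]
  exact Lf_eq_Gf X Y m
end

section
/- Let t = t(z) be the formal power series with t(1-t)^2 = z^2, t(0)=0. Then Σ_{i≥0} i · f_i(z) · g_i(z) = t(1+3t)/((1-t)(1-3t)^2), where f_i(z) = z^i/(1-t)^{i+1} is the generating function of Deutsch paths ending at level i, and g_i(z) is the generating function of reversed Deutsch paths ending at level i, given by g_i = (t/(2(1-t)^{i+1}))(μ2^i + μ3^i) - (z(t-2)/(2(1-t)^{i+2}))·(μ2^i - μ3^i)/(μ2 - μ3), with μ2 μ3 = t-1 and μ2 + μ3 = z/(1-t). -/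
/-- A reversed Deutsch step: an up-step 1, 3, 5, ... or the down-step -1. -/
def RevDeutschStep (s : ℤ) : Prop := s = -1 ∨ ∃ j : ℕ, s = 2 * j + 1

/-- A reversed Deutsch path: all steps are reversed Deutsch steps and all
partial sums (heights) are nonnegative. -/
def IsRevDeutschPath (p : List ℤ) : Prop :=
  (∀ s ∈ p, RevDeutschStep s) ∧ ∀ m : ℕ, 0 ≤ (p.take m).sum

/-- Number of reversed Deutsch paths from (0,0) to (n,k). -/
noncomputable def revDeutschCount (n k : ℕ) : ℕ :=
  Nat.card {p : List ℤ // p.length = n ∧ IsRevDeutschPath p ∧ p.sum = (k : ℤ)}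

namespace DeutschAux

/-- Generalized nonnegative path with step set `St`. -/
def GP (St : ℤ → Prop) (p : List ℤ) : Prop :=
  (∀ s ∈ p, St s) ∧ ∀ m : ℕ, 0 ≤ (p.take m).sum

lemma gp_deutsch (p : List ℤ) : IsDeutschPath p ↔ GP DeutschStep p := Iff.rfl
lemma gp_rev (p : List ℤ) : IsRevDeutschPath p ↔ GP RevDeutschStep p := Iff.rfl

lemma gp_sum_nonneg {St : ℤ → Prop} {p : List ℤ} (h : GP St p) : 0 ≤ p.sum := by
  have := h.2 p.length
  simpa using this

lemma gp_append {St : ℤ → Prop} {q : List ℤ} {s : ℤ} :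
    GP St (q ++ [s]) ↔ GP St q ∧ St s ∧ 0 ≤ q.sum + s := by
  constructor
  · rintro ⟨h1, h2⟩
    refine ⟨⟨fun x hx => h1 x (by simp [hx]), fun m => ?_⟩, h1 s (by simp), ?_⟩
    · rcases le_or_gt m q.length with hm | hm
      · have := h2 m
        rwa [List.take_append_of_le_length hm] at this
      · have := h2 q.length
        rw [List.take_append_of_le_length le_rfl, List.take_length] at this
        rw [List.take_of_length_le (le_of_lt hm)]
        exact this
    · have := h2 (q.length + 1)
      rw [List.take_of_length_le (by simp)] at this
      simpa using this
  · rintro ⟨⟨h1, h2⟩, hs, hsum⟩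
    refine ⟨fun x hx => ?_, fun m => ?_⟩
    · rcases List.mem_append.1 hx with h | h
      · exact h1 x h
      · simp at h; subst h; exact hs
    · rcases le_or_gt m q.length with hm | hm
      · rw [List.take_append_of_le_length hm]; exact h2 m
      · rw [List.take_of_length_le (by simp; omega)]
        simpa using hsum

lemma deutsch_step_le_one {s : ℤ} (h : DeutschStep s) : s ≤ 1 := by
  rcases h with h | ⟨j, h⟩ <;> subst h
  · exact le_refl 1
  · have : (0:ℤ) ≤ j := Int.ofNat_nonneg j
    linarith

lemma gp_deutsch_sum_le {p : List ℤ} (h : GP DeutschStep p) : p.sum ≤ p.length := by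
  have := List.sum_le_card_nsmul p 1 (fun x hx => deutsch_step_le_one (h.1 x hx))
  simpa using this

lemma rev_step_ge {s : ℤ} (h : RevDeutschStep s) : -1 ≤ s := by
  rcases h with h | ⟨j, h⟩ <;> subst h
  · exact le_refl (-1)
  · have : (0:ℤ) ≤ j := Int.ofNat_nonneg j
    linarith

/-- Finiteness of lists with bounded entries and fixed length. -/
lemma finite_of_bounds (n : ℕ) (lo hi : ℤ) (C : List ℤ → Prop)
    (h : ∀ p, C p → p.length = n ∧ ∀ s ∈ p, s ∈ Set.Icc lo hi) :
    Finite {p : List ℤ // C p} := by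
  have : Finite (Set.Icc lo hi) := (Set.finite_Icc lo hi).to_subtype
  refine Finite.of_injective
    (fun p : {p : List ℤ // C p} => fun i : Fin n =>
      (⟨p.1.get (Fin.cast (h p.1 p.2).1.symm i), (h p.1 p.2).2 _ (p.1.get_mem _)⟩ :
        Set.Icc lo hi)) ?_
  rintro ⟨p, hp⟩ ⟨q, hq⟩ hpq
  have hl : p.length = q.length := by rw [(h p hp).1, (h q hq).1]
  refine Subtype.ext (List.ext_get hl ?_)
  intro i h1 h2
  have := congrFun hpq ⟨i, by rw [(h p hp).1] at h1; exact h1⟩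
  simpa [Fin.cast] using (Subtype.ext_iff.1 this)

lemma deutsch_bounds {n : ℕ} {p : List ℤ} (hlen : p.length = n) (hp : GP DeutschStep p) :
    ∀ s ∈ p, s ∈ Set.Icc (-(n:ℤ)) 1 := by
  intro s hs
  refine ⟨?_, deutsch_step_le_one (hp.1 s hs)⟩
  rcases List.mem_iff_get.1 hs with ⟨⟨i, hi⟩, rfl⟩
  have h1 : 0 ≤ (p.take (i+1)).sum := hp.2 (i+1)
  have h2 : (p.take (i+1)).sum = (p.take i).sum + p.get ⟨i, hi⟩ := by
    rw [List.take_succ, List.getElem?_eq_getElem hi]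
    simp only [Option.toList_some, List.sum_append, List.sum_cons, List.sum_nil,
      List.get_eq_getElem, add_zero]
  have h3 : (p.take i).sum ≤ (p.take i).length := by
    have := List.sum_le_card_nsmul (p.take i) 1
      (fun x hx => deutsch_step_le_one (hp.1 x (List.take_subset i p hx)))
    simpa using this
  have h4 : (p.take i).length ≤ n := by
    rw [← hlen]; simp [List.length_take]
  have h34 : ((p.take i).length : ℤ) ≤ (n:ℤ) := by exact_mod_cast h4
  linarith

lemma rev_bounds {n : ℕ} {k : ℤ} {p : List ℤ} (hlen : p.length = n)
    (hp : GP RevDeutschStep p) (hsum : p.sum = k) :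
    ∀ s ∈ p, s ∈ Set.Icc (-1 : ℤ) (k + n) := by
  intro s hs
  refine ⟨rev_step_ge (hp.1 s hs), ?_⟩
  rcases List.mem_iff_get.1 hs with ⟨⟨i, hi⟩, rfl⟩
  have hsplit : (p.take (i+1)).sum + (p.drop (i+1)).sum = p.sum :=
    List.sum_take_add_sum_drop p (i+1)
  have hdrop : -( ((p.drop (i+1)).length : ℤ)) ≤ (p.drop (i+1)).sum := by
    have := List.card_nsmul_le_sum (p.drop (i+1)) (-1 : ℤ)
      (fun x hx => rev_step_ge (hp.1 x (List.drop_subset (i+1) p hx)))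
    simpa using this
  have hdl : ((p.drop (i+1)).length : ℤ) ≤ n := by
    have : (p.drop (i+1)).length ≤ n := by rw [← hlen]; simp
    exact_mod_cast this
  have h2 : (p.take (i+1)).sum = (p.take i).sum + p.get ⟨i, hi⟩ := by
    rw [List.take_succ, List.getElem?_eq_getElem hi]
    simp only [Option.toList_some, List.sum_append, List.sum_cons, List.sum_nil,
      List.get_eq_getElem, add_zero]
  have h0 : 0 ≤ (p.take i).sum := hp.2 i
  linarith

end DeutschAux

namespace DeutschAux

/-- Peel off the last step of a nonempty path. -/
noncomputable def peel (St : ℤ → Prop) (n : ℕ) (k : ℤ) (hk : 0 ≤ k) :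
    {p : List ℤ // p.length = n + 1 ∧ GP St p ∧ p.sum = k} ≃
    {sq : ℤ × List ℤ //
      St sq.1 ∧ sq.2.length = n ∧ GP St sq.2 ∧ sq.2.sum = k - sq.1} where
  toFun p := by
    refine ⟨(p.1.getLast ?_, p.1.dropLast), ?_⟩
    · have := p.2.1; intro h; rw [h] at this; simp at this
    · obtain ⟨hlen, hp, hsum⟩ := p.2
      have hne : p.1 ≠ [] := by intro h; rw [h] at hlen; simp at hlen
      have hdec : p.1.dropLast ++ [p.1.getLast hne] = p.1 :=
        List.dropLast_append_getLast hne
      have hgp : GP St (p.1.dropLast ++ [p.1.getLast hne]) := by rw [hdec]; exact hp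
      rw [gp_append] at hgp
      dsimp only
      refine ⟨hgp.2.1, ?_, hgp.1, ?_⟩
      · rw [List.length_dropLast, hlen]; omega
      · have := congrArg List.sum hdec
        simp at this
        omega
  invFun sq := by
    refine ⟨sq.1.2 ++ [sq.1.1], ?_, ?_, ?_⟩
    · simp [sq.2.2.1]
    · rw [gp_append]
      exact ⟨sq.2.2.2.1, sq.2.1, by have := sq.2.2.2.2; omega⟩
    · simp [sq.2.2.2.2]
  left_inv p := by
    apply Subtype.ext
    simp
    exact List.dropLast_append_getLast _
  right_inv sq := by
    apply Subtype.ext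
    simp [List.dropLast_concat, List.getLast_concat]

/-- Sigma over ℕ with fibers empty above m equals sigma over Fin m. -/
def sigmaFinEquiv {β : ℕ → Type*} (m : ℕ) (h : ∀ j, m ≤ j → IsEmpty (β j)) :
    (Σ j : ℕ, β j) ≃ Σ j : Fin m, β j.1 where
  toFun x := ⟨⟨x.1, by
      by_contra hlt
      exact (h x.1 (by omega)).false x.2⟩, x.2⟩
  invFun x := ⟨x.1.1, x.2⟩
  left_inv x := rfl
  right_inv x := rfl

lemma nat_card_sigma_range {β : ℕ → Type*} [∀ j, Finite (β j)] (m : ℕ)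
    (h : ∀ j, m ≤ j → IsEmpty (β j)) :
    Nat.card (Σ j : ℕ, β j) = ∑ j ∈ Finset.range m, Nat.card (β j) := by
  rw [Nat.card_congr (sigmaFinEquiv m h)]
  classical
  letI : ∀ j : Fin m, Fintype (β j.1) := fun j => Fintype.ofFinite _
  rw [Nat.card_eq_fintype_card, Fintype.card_sigma]
  rw [← Fin.sum_univ_eq_sum_range (fun j => Nat.card (β j)) m]
  exact Finset.sum_congr rfl fun j _ => (Nat.card_eq_fintype_card).symm

lemma nat_card_empty_of_sum_neg {St : ℤ → Prop} {n : ℕ} {k : ℤ} (hk : k < 0) :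
    Nat.card {q : List ℤ // q.length = n ∧ GP St q ∧ q.sum = k} = 0 := by
  have : IsEmpty {q : List ℤ // q.length = n ∧ GP St q ∧ q.sum = k} := by
    constructor; rintro ⟨q, -, hq, hs⟩
    have := gp_sum_nonneg hq; omega
  exact Nat.card_of_isEmpty

lemma deutsch_count_zero (k : ℕ) : deutschCount 0 k = if k = 0 then 1 else 0 := by
  unfold deutschCount
  split
  · next h =>
    subst h
    haveI : Unique {p : List ℤ // p.length = 0 ∧ IsDeutschPath p ∧ p.sum = ((0:ℕ) : ℤ)} := by
      refine ⟨⟨⟨[], by simp, ⟨by simp, by simp⟩, by simp⟩⟩, ?_⟩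
      rintro ⟨p, hlen, -, -⟩
      apply Subtype.ext
      simpa using List.eq_nil_of_length_eq_zero hlen
    exact Nat.card_unique
  · next h =>
    have : IsEmpty {p : List ℤ // p.length = 0 ∧ IsDeutschPath p ∧ p.sum = (k : ℤ)} := by
      constructor; rintro ⟨p, hlen, -, hs⟩
      rw [List.eq_nil_of_length_eq_zero hlen] at hs
      simp at hs
      omega
    exact Nat.card_of_isEmpty

lemma rev_count_zero (k : ℕ) : revDeutschCount 0 k = if k = 0 then 1 else 0 := by
  unfold revDeutschCount
  split
  · next h =>
    subst h
    haveI : Unique {p : List ℤ // p.length = 0 ∧ IsRevDeutschPath p ∧ p.sum = ((0:ℕ) : ℤ)} := by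
      refine ⟨⟨⟨[], by simp, ⟨by simp, by simp⟩, by simp⟩⟩, ?_⟩
      rintro ⟨p, hlen, -, -⟩
      apply Subtype.ext
      simpa using List.eq_nil_of_length_eq_zero hlen
    exact Nat.card_unique
  · next h =>
    have : IsEmpty {p : List ℤ // p.length = 0 ∧ IsRevDeutschPath p ∧ p.sum = (k : ℤ)} := by
      constructor; rintro ⟨p, hlen, -, hs⟩
      rw [List.eq_nil_of_length_eq_zero hlen] at hs
      simp at hs
      omega
    exact Nat.card_of_isEmpty

end DeutschAux

namespace DeutschAux

section Split

variable {St : ℤ → Prop} {a : ℤ} {f : ℕ → ℤ} {g : ℤ → ℕ}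

/-- Split a pair (step, path) according to the kind of step. -/
def stepSplit (hSt : ∀ s, St s → (s = a ∨ ∃ j : ℕ, s = f j)) (hSta : St a)
    (hStf : ∀ j, St (f j)) (hne : ∀ j, f j ≠ a) (hg : ∀ j, g (f j) = j)
    (P : ℤ → List ℤ → Prop) :
    {sq : ℤ × List ℤ // St sq.1 ∧ P sq.1 sq.2} ≃
      ({q : List ℤ // P a q} ⊕ Σ j : ℕ, {q : List ℤ // P (f j) q}) where
  toFun := fun ⟨(s, q), hs, hP⟩ =>
    if h : s = a then Sum.inl ⟨q, h ▸ hP⟩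
    else
      have hj : ∃ j : ℕ, s = f j := (hSt s hs).resolve_left h
      have e : f (g s) = s := by
        obtain ⟨j, rfl⟩ := hj; rw [hg]
      Sum.inr ⟨g s, ⟨q, e.symm ▸ hP⟩⟩
  invFun := fun x =>
    match x with
    | Sum.inl ⟨q, hq⟩ => ⟨(a, q), hSta, hq⟩
    | Sum.inr ⟨j, q, hq⟩ => ⟨(f j, q), hStf j, hq⟩
  left_inv := by
    rintro ⟨⟨s, q⟩, hs, hP⟩
    by_cases h : s = a
    · subst h; simp
    · simp only [dif_neg h]
      have hj : ∃ j : ℕ, s = f j := (hSt s hs).resolve_left h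
      have e : f (g s) = s := by obtain ⟨j, rfl⟩ := hj; rw [hg]
      apply Subtype.ext
      simp [e]
  right_inv := by
    rintro (⟨q, hq⟩ | ⟨j, q, hq⟩)
    · simp
    · simp only [dif_neg (hne j)]
      congr 1
      have e : g (f j) = j := hg j
      refine Sigma.ext (by simpa using e) ?_
      refine (Subtype.heq_iff_coe_eq ?_).2 rfl
      intro x
      show P (f (g (f j))) x ↔ P (f j) x
      rw [e]

end Split

/-- Finiteness of Deutsch path sets. -/
lemma finite_D (n : ℕ) (k : ℤ) :
    Finite {q : List ℤ // q.length = n ∧ GP DeutschStep q ∧ q.sum = k} :=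
  finite_of_bounds n (-(n:ℤ)) 1 _ (fun p hp => ⟨hp.1, deutsch_bounds hp.1 hp.2.1⟩)

lemma finite_R (n : ℕ) (k : ℤ) :
    Finite {q : List ℤ // q.length = n ∧ GP RevDeutschStep q ∧ q.sum = k} :=
  finite_of_bounds n (-1) (k + n) _
    (fun p hp => ⟨hp.1, rev_bounds hp.1 hp.2.1 hp.2.2⟩)

lemma deutsch_rec (n κ : ℕ) :
    deutschCount (n+1) κ =
      (if κ = 0 then 0 else deutschCount n (κ - 1)) +
        ∑ j ∈ Finset.range (n+1), deutschCount n (κ + 2*j + 1) := by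
  classical
  have hk : (0:ℤ) ≤ (κ:ℤ) := Int.ofNat_nonneg κ
  have e1 : deutschCount (n+1) κ =
      Nat.card {sq : ℤ × List ℤ // DeutschStep sq.1 ∧
        (sq.2.length = n ∧ GP DeutschStep sq.2 ∧ sq.2.sum = (κ:ℤ) - sq.1)} := by
    unfold deutschCount
    exact Nat.card_congr (peel DeutschStep n (κ:ℤ) hk)
  rw [e1]
  have e2 := Nat.card_congr (stepSplit (St := DeutschStep) (a := 1)
    (f := fun j => -(2*(j:ℤ)+1)) (g := fun s => ((-s-1)/2).toNat)
    (fun s hs => hs) (Or.inl rfl) (fun j => Or.inr ⟨j, rfl⟩)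
    (fun j => by omega) (fun j => by omega)
    (fun s q => q.length = n ∧ GP DeutschStep q ∧ q.sum = (κ:ℤ) - s))
  rw [e2]
  haveI : Finite {q : List ℤ // q.length = n ∧ GP DeutschStep q ∧ q.sum = (κ:ℤ) - 1} :=
    finite_D n _
  haveI hfib : ∀ j : ℕ, Finite {q : List ℤ //
      q.length = n ∧ GP DeutschStep q ∧ q.sum = (κ:ℤ) - (-(2*(j:ℤ)+1))} :=
    fun j => finite_D n _
  have hempty : ∀ j : ℕ, n + 1 ≤ j → IsEmpty {q : List ℤ //
      q.length = n ∧ GP DeutschStep q ∧ q.sum = (κ:ℤ) - (-(2*(j:ℤ)+1))} := by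
    intro j hj
    constructor
    rintro ⟨q, hlen, hq, hsum⟩
    have h1 := gp_deutsch_sum_le hq
    rw [hlen, hsum] at h1
    omega
  haveI : Finite (Σ j : ℕ, {q : List ℤ //
      q.length = n ∧ GP DeutschStep q ∧ q.sum = (κ:ℤ) - (-(2*(j:ℤ)+1))}) :=
    Finite.of_equiv _ (sigmaFinEquiv (n+1) hempty).symm
  have hup : Nat.card {q : List ℤ // q.length = n ∧ GP DeutschStep q ∧ q.sum = (κ:ℤ) - 1} =
      (if κ = 0 then 0 else deutschCount n (κ - 1)) := by
    by_cases h : κ = 0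
    · subst h
      rw [if_pos rfl]
      exact nat_card_empty_of_sum_neg (by omega)
    · rw [if_neg h]
      have : (κ:ℤ) - 1 = ((κ - 1 : ℕ) : ℤ) := by omega
      rw [this]
      rfl
  have hdn : Nat.card (Σ j : ℕ, {q : List ℤ //
      q.length = n ∧ GP DeutschStep q ∧ q.sum = (κ:ℤ) - (-(2*(j:ℤ)+1))}) =
      ∑ j ∈ Finset.range (n+1), deutschCount n (κ + 2*j + 1) := by
    rw [nat_card_sigma_range (n+1) hempty]
    refine Finset.sum_congr rfl fun j _ => ?_
    have : (κ:ℤ) - (-(2*(j:ℤ)+1)) = ((κ + 2*j + 1 : ℕ) : ℤ) := by push_cast; ring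
    rw [this]
    rfl
  rw [Nat.card_sum, hup, hdn]

lemma rev_rec (n κ : ℕ) :
    revDeutschCount (n+1) κ =
      revDeutschCount n (κ + 1) +
        ∑ j ∈ Finset.range κ,
          (if 2*j + 1 ≤ κ then revDeutschCount n (κ - (2*j + 1)) else 0) := by
  classical
  have hk : (0:ℤ) ≤ (κ:ℤ) := Int.ofNat_nonneg κ
  have e1 : revDeutschCount (n+1) κ =
      Nat.card {sq : ℤ × List ℤ // RevDeutschStep sq.1 ∧
        (sq.2.length = n ∧ GP RevDeutschStep sq.2 ∧ sq.2.sum = (κ:ℤ) - sq.1)} := by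
    unfold revDeutschCount
    exact Nat.card_congr (peel RevDeutschStep n (κ:ℤ) hk)
  rw [e1]
  have e2 := Nat.card_congr (stepSplit (St := RevDeutschStep) (a := -1)
    (f := fun j => 2*(j:ℤ)+1) (g := fun s => ((s-1)/2).toNat)
    (fun s hs => hs) (Or.inl rfl) (fun j => Or.inr ⟨j, rfl⟩)
    (fun j => by omega) (fun j => by omega)
    (fun s q => q.length = n ∧ GP RevDeutschStep q ∧ q.sum = (κ:ℤ) - s))
  rw [e2]
  haveI : Finite {q : List ℤ // q.length = n ∧ GP RevDeutschStep q ∧ q.sum = (κ:ℤ) - (-1)} :=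
    finite_R n _
  haveI hfib : ∀ j : ℕ, Finite {q : List ℤ //
      q.length = n ∧ GP RevDeutschStep q ∧ q.sum = (κ:ℤ) - (2*(j:ℤ)+1)} :=
    fun j => finite_R n _
  have hempty : ∀ j : ℕ, κ ≤ j → IsEmpty {q : List ℤ //
      q.length = n ∧ GP RevDeutschStep q ∧ q.sum = (κ:ℤ) - (2*(j:ℤ)+1)} := by
    intro j hj
    constructor
    rintro ⟨q, hlen, hq, hsum⟩
    have h1 := gp_sum_nonneg hq
    omega
  haveI : Finite (Σ j : ℕ, {q : List ℤ //
      q.length = n ∧ GP RevDeutschStep q ∧ q.sum = (κ:ℤ) - (2*(j:ℤ)+1)}) :=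
    Finite.of_equiv _ (sigmaFinEquiv κ hempty).symm
  have hup : Nat.card {q : List ℤ // q.length = n ∧ GP RevDeutschStep q ∧ q.sum = (κ:ℤ) - (-1)} =
      revDeutschCount n (κ + 1) := by
    have : (κ:ℤ) - (-1) = ((κ + 1 : ℕ) : ℤ) := by push_cast; ring
    rw [this]
    rfl
  have hdn : Nat.card (Σ j : ℕ, {q : List ℤ //
      q.length = n ∧ GP RevDeutschStep q ∧ q.sum = (κ:ℤ) - (2*(j:ℤ)+1)}) =
      ∑ j ∈ Finset.range κ,
        (if 2*j + 1 ≤ κ then revDeutschCount n (κ - (2*j + 1)) else 0) := by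
    rw [nat_card_sigma_range κ hempty]
    refine Finset.sum_congr rfl fun j hj => ?_
    by_cases h : 2*j + 1 ≤ κ
    · rw [if_pos h]
      have : (κ:ℤ) - (2*(j:ℤ)+1) = ((κ - (2*j + 1) : ℕ) : ℤ) := by omega
      rw [this]
      rfl
    · rw [if_neg h]
      exact nat_card_empty_of_sum_neg (by omega)
  rw [Nat.card_sum, hup, hdn]

end DeutschAux

namespace DeutschAux

open PowerSeries

noncomputable section PS

variable (t : PowerSeries ℚ)

def ww : PowerSeries ℚ := (1 - t)⁻¹
def xx : PowerSeries ℚ := X * ww t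
def phi (k : ℕ) : PowerSeries ℚ := X ^ k * (ww t) ^ (k + 1)
def sig (k : ℕ) : PowerSeries ℚ := X ^ (k + 1) * (ww t) ^ (k + 3)

def gam : ℕ → PowerSeries ℚ
  | 0 => ww t
  | 1 => xx t * (ww t) ^ 2
  | 2 => ww t * (xx t * (xx t * (ww t) ^ 2) + ww t - 1)
  | (k+3) => ww t * (xx t * gam (k+2) + gam (k+1))

def Sg (k : ℕ) : PowerSeries ℚ :=
  ∑ j ∈ Finset.range k, (if 2*j + 1 ≤ k then gam t (k - (2*j+1)) else 0)

def del (k : ℕ) : PowerSeries ℚ := xx t ^ k * gam t k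

variable {t}
variable (ht : t * (1 - t) ^ 2 = X ^ 2) (ht0 : constantCoeff t = 0)

section Algebra

lemma Sg_zero : Sg t 0 = 0 := by simp [Sg]

lemma Sg_one : Sg t 1 = gam t 0 := by simp [Sg]

lemma Sg_rec (k : ℕ) : Sg t (k+2) = gam t (k+1) + Sg t k := by
  have h1 : Sg t (k+2) = ∑ j ∈ Finset.range (k+2),
      (if 2*j+1 ≤ k+2 then gam t (k+2 - (2*j+1)) else 0) := rfl
  rw [h1, Finset.sum_range_succ']
  have h2 : ∀ j, (if 2*(j+1)+1 ≤ k+2 then gam t (k+2 - (2*(j+1)+1)) else 0) =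
      (if 2*j+1 ≤ k then gam t (k - (2*j+1)) else 0) := by
    intro j
    by_cases h : 2*j+1 ≤ k
    · rw [if_pos (by omega : 2*(j+1)+1 ≤ k+2), if_pos h]
      have he : k+2 - (2*(j+1)+1) = k - (2*j+1) := by omega
      rw [he]
    · rw [if_neg (by omega : ¬ (2*(j+1)+1 ≤ k+2)), if_neg h]
  rw [Finset.sum_congr rfl (fun j _ => h2 j), if_pos (show 2*0+1 ≤ k+2 by omega)]
  have h3 : gam t (k+2 - (2*0+1)) = gam t (k+1) := by norm_num
  rw [h3]
  have h4 : Sg t k = ∑ j ∈ Finset.range (k+1),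
      (if 2*j+1 ≤ k then gam t (k - (2*j+1)) else 0) := by
    rw [Finset.sum_range_succ, if_neg (by omega : ¬ (2*k+1 ≤ k)), add_zero]
    rfl
  rw [h4, add_comm]


include ht0

lemma hw : (1 - t) * ww t = 1 := by
  apply PowerSeries.mul_inv_cancel
  rw [map_sub, map_one, ht0, sub_zero]
  norm_num

include ht

lemma ht2 : t = X ^ 2 * (ww t) ^ 2 := by
  have h := hw ht0
  linear_combination ((ww t)^2) * ht + (-(t*((1-t)*(ww t) - 1)) - 2*t) * h

lemma hr : ww t = 1 + X ^ 2 * (ww t) ^ 3 := by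
  have h := hw ht0
  linear_combination h + (ww t) * ht2 ht ht0

lemma hxx2 : xx t * xx t = t := by
  have h2 := ht2 ht ht0
  rw [xx]
  linear_combination (-1 : PowerSeries ℚ) * h2

lemma claimA : ∀ k : ℕ, (1 - t) * gam t (k+2) =
    xx t * gam t (k+1) + gam t k - (if k = 0 then 1 else 0) := by
  intro k
  match k with
  | 0 =>
    rw [if_pos rfl]
    have h2 := ht2 ht ht0
    have h3 := hr ht ht0
    simp only [gam, xx]
    set W := ww t with hW
    linear_combination (W + (-1)*W^2 + (-1)*X^2*W^5) * h2 + ((-1) + W + X^2*W^4) * h3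
  | (k+1) =>
    rw [if_neg (Nat.succ_ne_zero k)]
    have : gam t (k+3) = ww t * (xx t * gam t (k+2) + gam t (k+1)) := rfl
    rw [this, ← mul_assoc, hw ht0, one_mul, sub_zero]

lemma grec : ∀ k : ℕ, gam t k =
    (if k = 0 then 1 else 0) + X * gam t (k+1) + X * Sg t k := by
  have key : ∀ k : ℕ, (gam t k =
      (if k = 0 then 1 else 0) + X * gam t (k+1) + X * Sg t k) ∧
      (gam t (k+1) =
      (if k+1 = 0 then 1 else 0) + X * gam t (k+2) + X * Sg t (k+1)) := by
    intro k
    induction k with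
    | zero =>
      constructor
      · rw [if_pos rfl, Sg_zero]
        have h3 := hr ht ht0
        simp only [gam, xx]
        set W := ww t
        linear_combination h3
      · rw [if_neg (by omega), Sg_one]
        have h2 := ht2 ht ht0
        have h3 := hr ht ht0
        simp only [gam, xx]
        set W := ww t
        linear_combination (X*W^2) * h3
    | succ k ih =>
      refine ⟨ih.2, ?_⟩
      rw [if_neg (by omega)]
      -- goal : gam (k+2) = X * gam (k+3) + X * Sg (k+2)
      have hg3 : gam t (k+3) = ww t * (xx t * gam t (k+2) + gam t (k+1)) := rfl
      have hca := claimA ht ht0 k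
      have hQ := ih.1
      rw [hg3, Sg_rec]
      have hxxd : xx t = X * ww t := rfl
      have hx2 := hxx2 ht ht0
      -- use (1-t) * gam (k+2) = xx*gam (k+1) + gam k - e
      linear_combination (xx t * gam t (k+2) + gam t (k+1)) * hxxd +
        (-(gam t (k+2))) * hx2 + hca + hQ
  exact fun k => (key k).1

lemma f1 : phi t 0 = 1 + X * sig t 0 := by
  have h3 := hr ht ht0
  simp only [phi, sig]
  set W := ww t
  linear_combination h3

lemma f2 (k : ℕ) : phi t (k+1) = X * phi t k + X * sig t (k+1) := by
  have h3 := hr ht ht0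
  have c2 : X * (ww t)^2 = X * ww t + X^3 * (ww t)^4 := by
    set W := ww t
    linear_combination (X*W) * h3
  calc phi t (k+1) = X^k * (ww t)^k * (X * (ww t)^2) := by rw [phi]; ring
    _ = X^k * (ww t)^k * (X * ww t + X^3 * (ww t)^4) := by rw [c2]
    _ = X * phi t k + X * sig t (k+1) := by rw [phi, sig]; ring

lemma sigrec (k : ℕ) : sig t k = phi t (k+1) + sig t (k+2) := by
  have h3 := hr ht ht0
  have c3 : X * (ww t)^3 = X * (ww t)^2 + X^3 * (ww t)^5 := by
    set W := ww t
    linear_combination (X*W^2) * h3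
  calc sig t k = X^k * (ww t)^k * (X * (ww t)^3) := by rw [sig]; ring
    _ = X^k * (ww t)^k * (X * (ww t)^2 + X^3 * (ww t)^5) := by rw [c3]
    _ = phi t (k+1) + sig t (k+2) := by rw [phi, sig]; ring

omit ht ht0

lemma coeff_phi_zero {n k : ℕ} (h : n < k) : coeff n (phi t k) = 0 := by
  have : X ^ k ∣ phi t k := Dvd.intro _ rfl
  exact (PowerSeries.X_pow_dvd_iff.1 this) n h

lemma coeff_sig_zero {n k : ℕ} (h : n < k + 1) : coeff n (sig t k) = 0 := by
  have : X ^ (k+1) ∣ sig t k := Dvd.intro _ rfl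
  exact (PowerSeries.X_pow_dvd_iff.1 this) n h

include ht ht0

lemma sig_sum (n k : ℕ) :
    coeff n (sig t k) = ∑ j ∈ Finset.range (n+1), coeff n (phi t (k + 2*j + 1)) := by
  have main : ∀ J k, sig t k =
      (∑ j ∈ Finset.range J, phi t (k + 2*j + 1)) + sig t (k + 2*J) := by
    intro J
    induction J with
    | zero => intro k; simp
    | succ J ih =>
      intro k
      rw [Finset.sum_range_succ, ih k, sigrec ht ht0 (k + 2*J)]
      rw [show k + 2*(J+1) = k + 2*J + 1 + 1 from by ring]
      ring
  rw [main (n+1) k, map_add, map_sum]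
  have : coeff n (sig t (k + 2*(n+1))) = 0 := coeff_sig_zero (by omega)
  rw [this, add_zero]

omit ht ht0

lemma hcw (ht0 : constantCoeff t = 0) : constantCoeff (ww t) = 1 := by
  have h := hw ht0
  have := congrArg (constantCoeff) h
  rw [map_mul, map_sub, map_one, ht0, sub_zero, one_mul] at this
  simpa using this

lemma hcx (ht0 : constantCoeff t = 0) : constantCoeff (xx t) = 0 := by
  rw [xx, map_mul, PowerSeries.constantCoeff_X, zero_mul]

lemma coeff_zero_phi (ht0 : constantCoeff t = 0) (k : ℕ) :
    coeff 0 (phi t k) = if k = 0 then 1 else 0 := by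
  match k with
  | 0 =>
    rw [if_pos rfl, phi]
    simp [PowerSeries.coeff_zero_eq_constantCoeff, hcw ht0]
  | (k+1) =>
    rw [if_neg (Nat.succ_ne_zero k)]
    exact coeff_phi_zero (by omega)

lemma gam_const (ht0 : constantCoeff t = 0) :
    ∀ k, constantCoeff (gam t (k+1)) = 0 := by
  have key : ∀ k, constantCoeff (gam t (k+1)) = 0 ∧ constantCoeff (gam t (k+2)) = 0 := by
    intro k
    induction k with
    | zero =>
      constructor
      · show constantCoeff (xx t * (ww t)^2) = 0
        rw [map_mul, hcx ht0, zero_mul]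
      · show constantCoeff (ww t * (xx t * (xx t * (ww t) ^ 2) + ww t - 1)) = 0
        rw [map_mul, map_sub, map_add, map_mul, hcx ht0, zero_mul, hcw ht0, map_one]
        ring
    | succ k ih =>
      refine ⟨ih.2, ?_⟩
      show constantCoeff (ww t * (xx t * gam t (k+2) + gam t (k+1))) = 0
      rw [map_mul, map_add, map_mul, hcx ht0, zero_mul, zero_add, ih.1, mul_zero]
  exact fun k => (key k).1

lemma coeff_zero_gam (ht0 : constantCoeff t = 0) (k : ℕ) :
    coeff 0 (gam t k) = if k = 0 then 1 else 0 := by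
  match k with
  | 0 =>
    rw [if_pos rfl]
    show coeff 0 (ww t) = 1
    rw [PowerSeries.coeff_zero_eq_constantCoeff, hcw ht0]
  | (k+1) =>
    rw [if_neg (Nat.succ_ne_zero k), PowerSeries.coeff_zero_eq_constantCoeff, gam_const ht0]

include ht ht0

lemma funfold (k : ℕ) : phi t k =
    (if k = 0 then 1 else 0) + (if k = 0 then 0 else X * phi t (k-1)) + X * sig t k := by
  match k with
  | 0 =>
    rw [if_pos rfl, if_pos rfl, add_zero]
    exact f1 ht ht0
  | (k+1) =>
    rw [if_neg (Nat.succ_ne_zero k), if_neg (Nat.succ_ne_zero k), zero_add]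
    have : k + 1 - 1 = k := by omega
    rw [this]
    exact f2 ht ht0 k

lemma Fmk_coeff : ∀ n k, (deutschCount n k : ℚ) = coeff n (phi t k) := by
  intro n
  induction n with
  | zero =>
    intro k
    rw [coeff_zero_phi ht0, deutsch_count_zero]
    split <;> simp
  | succ n ih =>
    intro k
    rw [deutsch_rec]
    push_cast
    rw [funfold ht ht0 k, map_add, map_add]
    have hc1 : coeff (n+1) ((if k = 0 then 1 else 0) : PowerSeries ℚ) = 0 := by
      split
      · rw [PowerSeries.coeff_one]; simp
      · simp
    have hc2 : coeff (n+1) ((if k = 0 then 0 else X * phi t (k-1)) : PowerSeries ℚ) =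
        (if k = 0 then 0 else coeff n (phi t (k-1))) := by
      split
      · simp
      · rw [PowerSeries.coeff_succ_X_mul]
    rw [hc1, hc2, PowerSeries.coeff_succ_X_mul, sig_sum ht ht0, zero_add]
    congr 1
    · split
      · rfl
      · exact ih _
    · exact Finset.sum_congr rfl fun j _ => ih _

lemma Fmk (k : ℕ) : (PowerSeries.mk fun n => (deutschCount n k : ℚ)) = phi t k := by
  ext n
  rw [PowerSeries.coeff_mk]
  exact Fmk_coeff ht ht0 n k

lemma Gmk_coeff : ∀ n k, (revDeutschCount n k : ℚ) = coeff n (gam t k) := by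
  intro n
  induction n with
  | zero =>
    intro k
    rw [coeff_zero_gam ht0, rev_count_zero]
    split <;> simp
  | succ n ih =>
    intro k
    rw [rev_rec]
    push_cast
    rw [grec ht ht0 k, map_add, map_add]
    have hc1 : coeff (n+1) ((if k = 0 then 1 else 0) : PowerSeries ℚ) = 0 := by
      split
      · rw [PowerSeries.coeff_one]; simp
      · simp
    have hSg : coeff n (Sg t k) =
        ∑ j ∈ Finset.range k, (if 2*j+1 ≤ k then coeff n (gam t (k - (2*j+1))) else 0) := by
      rw [Sg, map_sum]
      exact Finset.sum_congr rfl fun j _ => by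
        split <;> simp
    rw [hc1, PowerSeries.coeff_succ_X_mul, PowerSeries.coeff_succ_X_mul, hSg, zero_add]
    congr 1
    · exact ih _
    · refine Finset.sum_congr rfl fun j _ => ?_
      split
      · exact ih _
      · rfl

lemma Gmk (k : ℕ) : (PowerSeries.mk fun n => (revDeutschCount n k : ℚ)) = gam t k := by
  ext n
  rw [PowerSeries.coeff_mk]
  exact Gmk_coeff ht ht0 n k

omit ht ht0

def onef : ℕ → ℚ := fun _ => 1
def avf : ℕ → ℚ := fun k => k

variable (t)

def Wser (a : ℕ → ℚ) : PowerSeries ℚ :=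
  PowerSeries.mk fun n => ∑ k ∈ Finset.range (n+1), a k * coeff n (del t k)

def PW (a : ℕ → ℚ) (N : ℕ) : PowerSeries ℚ :=
  ∑ k ∈ Finset.range N, PowerSeries.C (a k) * del t k

def Cc : PowerSeries ℚ :=
  (1-t) * (del t 0 + del t 1 + del t 2) - t*(del t 0 + del t 1) - t*(del t 0)

def Dd : PowerSeries ℚ :=
  (1-t) * (del t 1 + 2*del t 2) - 2*t*del t 1 - 3*t*del t 0

variable {t}

lemma PW_zero (a : ℕ → ℚ) : PW t a 0 = 0 := Finset.sum_range_zero _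

lemma PW_succ (a : ℕ → ℚ) (M : ℕ) :
    PW t a (M+1) = PW t a M + PowerSeries.C (a M) * del t M :=
  Finset.sum_range_succ _ _

lemma coeff_del_zero {n k : ℕ} (h : n < k) : coeff n (del t k) = 0 := by
  have e : del t k = X^k * ((ww t)^k * gam t k) := by rw [del, xx]; ring
  have : X ^ k ∣ del t k := ⟨_, e⟩
  exact (PowerSeries.X_pow_dvd_iff.1 this) n h

lemma coeff_Wser (a : ℕ → ℚ) {n N : ℕ} (h : n < N) :
    coeff n (Wser t a) = coeff n (PW t a N) := by
  rw [Wser, PowerSeries.coeff_mk, PW, map_sum]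
  have e : ∀ k, coeff n (PowerSeries.C (a k) * del t k) = a k * coeff n (del t k) :=
    fun k => PowerSeries.coeff_C_mul _ _ _
  rw [Finset.sum_congr rfl (fun k _ => e k)]
  refine Finset.sum_subset (Finset.range_subset_range.2 (by omega)) ?_
  intro k hk hnk
  rw [Finset.mem_range] at hk
  rw [Finset.mem_range] at hnk
  rw [coeff_del_zero (by omega), mul_zero]

lemma bridge (c : PowerSeries ℚ) (a : ℕ → ℚ) {n N : ℕ} (h : n < N) :
    coeff n (c * Wser t a) = coeff n (c * PW t a N) := by
  rw [PowerSeries.coeff_mul, PowerSeries.coeff_mul]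
  refine Finset.sum_congr rfl fun p hp => ?_
  rw [Finset.HasAntidiagonal.mem_antidiagonal] at hp
  congr 1
  exact coeff_Wser a (by omega)

include ht ht0

lemma delrec (k : ℕ) :
    (1 - t) * del t (k+3) = t * del t (k+2) + t * del t (k+1) := by
  have hca := claimA ht ht0 (k+1)
  rw [if_neg (Nat.succ_ne_zero k), sub_zero] at hca
  have hx2 := hxx2 ht ht0
  simp only [del]
  linear_combination ((xx t)^(k+3)) * hca +
    ((xx t)^(k+2) * gam t (k+2) + (xx t)^(k+1) * gam t (k+1)) * hx2

lemma PTrec : ∀ N : ℕ, (1-t) * PW t onef (N+3) =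
    t * PW t onef (N+2) + t * PW t onef (N+1) + Cc t := by
  intro N
  induction N with
  | zero =>
    rw [show (3:ℕ) = 2+1 from rfl, PW_succ, show (2:ℕ) = 1+1 from rfl, PW_succ,
      show (1:ℕ) = 0+1 from rfl, PW_succ, PW_zero]
    simp only [onef, map_one, one_mul, Cc]
    ring
  | succ N ih =>
    rw [show N+1+3 = (N+3)+1 by omega, show N+1+2 = (N+2)+1 by omega]
    rw [PW_succ onef (N+3), PW_succ onef (N+2), PW_succ onef (N+1)]
    rw [PW_succ onef (N+2), PW_succ onef (N+1)] at ih
    simp only [onef, map_one, one_mul] at ih ⊢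
    linear_combination ih + delrec ht ht0 N

lemma PVrec : ∀ N : ℕ, (1-t) * PW t avf (N+3) =
    t * PW t avf (N+2) + t * PW t avf (N+1) +
      t * PW t onef (N+2) + 2 * (t * PW t onef (N+1)) + Dd t := by
  have ePW3 : ∀ a : ℕ → ℚ, PW t a 3 =
      PowerSeries.C (a 0) * del t 0 + PowerSeries.C (a 1) * del t 1 +
        PowerSeries.C (a 2) * del t 2 := by
    intro a
    rw [PW, Finset.sum_range_succ, Finset.sum_range_succ, Finset.sum_range_one]
  have ePW2 : ∀ a : ℕ → ℚ, PW t a 2 =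
      PowerSeries.C (a 0) * del t 0 + PowerSeries.C (a 1) * del t 1 := by
    intro a
    rw [PW, Finset.sum_range_succ, Finset.sum_range_one]
  have ePW1 : ∀ a : ℕ → ℚ, PW t a 1 = PowerSeries.C (a 0) * del t 0 := by
    intro a
    rw [PW, Finset.sum_range_one]
  intro N
  induction N with
  | zero =>
    rw [show (0:ℕ)+3 = 3 from rfl, show (0:ℕ)+2 = 2 from rfl, show (0:ℕ)+1 = 1 from rfl,
      ePW3, ePW2, ePW2, ePW1, ePW1]
    have h0 : avf 0 = 0 := by norm_num [avf]
    have h1 : avf 1 = 1 := by norm_num [avf]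
    have h2 : avf 2 = 2 := by norm_num [avf]
    rw [h0, h1, h2]
    simp only [onef, map_one, map_zero, one_mul, zero_mul, map_ofNat, Dd]
    ring
  | succ N ih =>
    rw [show N+1+3 = (N+3)+1 by omega, show N+1+2 = (N+2)+1 by omega]
    rw [PW_succ avf (N+3), PW_succ avf (N+2), PW_succ avf (N+1),
      PW_succ onef (N+2), PW_succ onef (N+1)]
    rw [PW_succ avf (N+2), PW_succ avf (N+1), PW_succ onef (N+1)] at ih
    simp only [onef, map_one, one_mul] at ih ⊢
    have hC3 : PowerSeries.C (avf (N+3)) = PowerSeries.C (avf (N+2)) + 1 := by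
      have : avf (N+3) = avf (N+2) + 1 := by simp only [avf]; push_cast; ring
      rw [this, map_add, map_one]
    have hC31 : PowerSeries.C (avf (N+3)) = PowerSeries.C (avf (N+1)) + 2 := by
      have : avf (N+3) = avf (N+1) + 2 := by simp only [avf]; push_cast; ring
      rw [this, map_add, map_ofNat]
    linear_combination ih + (PowerSeries.C (avf (N+3))) * delrec ht ht0 N +
      (t * del t (N+2)) * hC3 + (t * del t (N+1)) * hC31

lemma idT : (1 - 3*t) * Wser t onef = Cc t := by
  ext n
  have b0 : coeff n ((1-3*t) * Wser t onef) =
      coeff n ((1-3*t) * PW t onef (n+3)) := bridge _ _ (by omega)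
  have e : (1-3*t) * PW t onef (n+3) =
      ((1-t) * PW t onef (n+3)) - t * PW t onef (n+3) - t * PW t onef (n+3) := by ring
  rw [b0, e, PTrec ht ht0 n]
  rw [map_sub, map_sub, map_add, map_add]
  have q2 : coeff n (t * PW t onef (n+2)) = coeff n (t * Wser t onef) :=
    (bridge t onef (by omega)).symm
  have q1 : coeff n (t * PW t onef (n+1)) = coeff n (t * Wser t onef) :=
    (bridge t onef (by omega)).symm
  have q3 : coeff n (t * PW t onef (n+3)) = coeff n (t * Wser t onef) :=
    (bridge t onef (by omega)).symm
  rw [q1, q2, q3]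
  ring

lemma idV : (1 - 3*t) * Wser t avf = 3*t*Wser t onef + Dd t := by
  ext n
  have b0 : coeff n ((1-3*t) * Wser t avf) =
      coeff n ((1-3*t) * PW t avf (n+3)) := bridge _ _ (by omega)
  have e : (1-3*t) * PW t avf (n+3) =
      ((1-t) * PW t avf (n+3)) - t * PW t avf (n+3) - t * PW t avf (n+3) := by ring
  rw [b0, e, PVrec ht ht0 n]
  rw [map_sub, map_sub, map_add, map_add, map_add, map_add]
  have qa2 : coeff n (t * PW t avf (n+2)) = coeff n (t * Wser t avf) :=
    (bridge t avf (by omega)).symm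
  have qa1 : coeff n (t * PW t avf (n+1)) = coeff n (t * Wser t avf) :=
    (bridge t avf (by omega)).symm
  have qa3 : coeff n (t * PW t avf (n+3)) = coeff n (t * Wser t avf) :=
    (bridge t avf (by omega)).symm
  have qo2 : coeff n (t * PW t onef (n+2)) = coeff n (t * Wser t onef) :=
    (bridge t onef (by omega)).symm
  have qo1 : coeff n (t * PW t onef (n+1)) = coeff n (t * Wser t onef) :=
    (bridge t onef (by omega)).symm
  have h2 : coeff n (2 * (t * PW t onef (n+1))) = 2 * coeff n (t * Wser t onef) := by
    have : (2 : PowerSeries ℚ) * (t * PW t onef (n+1)) =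
        t * PW t onef (n+1) + t * PW t onef (n+1) := by ring
    rw [this, map_add, qo1]
    ring
  rw [qa1, qa2, qa3, qo2, h2]
  have hr3 : coeff n (3*t*Wser t onef + Dd t) =
      3 * coeff n (t * Wser t onef) + coeff n (Dd t) := by
    have : (3:PowerSeries ℚ)*t*Wser t onef = t*Wser t onef + t*Wser t onef + t*Wser t onef := by
      ring
    rw [map_add, this, map_add, map_add]
    ring
  rw [hr3]
  ring

omit ht ht0 in
lemma phigam (k : ℕ) : phi t k * gam t k = ww t * del t k := by
  rw [phi, del, xx]
  ring

lemma final_alg : 3*t*Cc t + (1-3*t)*Dd t = t*(1+3*t) := by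
  have h2 := ht2 ht ht0
  have h3 := hr ht ht0
  simp only [Cc, Dd, del, gam, xx]
  set W := ww t with hW
  linear_combination ((-1) + (-3)*X^2*W^2 + (5)*X^2*W^3 + (-8)*X^2*W^4 + (-3)*X^4*W^5 +
      (6)*X^4*W^6 + (-5)*X^4*W^7 + (3)*X^6*W^9 + (-3)*t + (-3)*t*X^2*W^3 + (6)*t*X^2*W^4 +
      (3)*t*X^4*W^7) * h2 +
    (X^2*W^2 + (3)*X^2*W^3 + (3)*X^4*W^4 + (-3)*X^4*W^5 + (2)*X^4*W^6 + (-3)*X^6*W^8) * h3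

end Algebra

end PS

end DeutschAux



/-- With t the power series solution of t(1-t)² = z², t(0) = 0,
the cumulative area generating function Σ_{i≥0} i·f_i(z)·g_i(z) equals
t(1+3t)/((1-t)(1-3t)²).  Here f_i (resp. g_i) is the generating function of
Deutsch (resp. reversed Deutsch) paths ending at level i; the sum over i has
finite support in each coefficient (paths reaching level i have length ≥ i),
so its n-th coefficient is Σ_{i ≤ n} i·[zⁿ](f_i·g_i).  The identity is stated
multiplied through by (1-t)(1-3t)². -/
theorem deutsch_area_generating_function (t : PowerSeries ℚ)
    (ht : t * (1 - t) ^ 2 = PowerSeries.X ^ 2)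
    (ht0 : PowerSeries.constantCoeff t = 0) :
    (PowerSeries.mk fun n =>
        ∑ i ∈ Finset.range (n + 1),
          (i : ℚ) *
            PowerSeries.coeff n
              ((PowerSeries.mk fun m => (deutschCount m i : ℚ)) *
                (PowerSeries.mk fun m => (revDeutschCount m i : ℚ)))) *
        ((1 - t) * (1 - 3 * t) ^ 2) =
      t * (1 + 3 * t) := by
  classical
  have hS : (PowerSeries.mk fun n =>
        ∑ i ∈ Finset.range (n + 1),
          (i : ℚ) *
            PowerSeries.coeff n
              ((PowerSeries.mk fun m => (deutschCount m i : ℚ)) *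
                (PowerSeries.mk fun m => (revDeutschCount m i : ℚ)))) =
      DeutschAux.ww t * DeutschAux.Wser t DeutschAux.avf := by
    ext n
    rw [PowerSeries.coeff_mk]
    have hb : PowerSeries.coeff n (DeutschAux.ww t * DeutschAux.Wser t DeutschAux.avf) =
        PowerSeries.coeff n (DeutschAux.ww t * DeutschAux.PW t DeutschAux.avf (n+1)) :=
      DeutschAux.bridge _ _ (by omega)
    rw [hb]
    have hPW : DeutschAux.ww t * DeutschAux.PW t DeutschAux.avf (n+1) =
        ∑ k ∈ Finset.range (n+1),
          PowerSeries.C (DeutschAux.avf k) * (DeutschAux.ww t * DeutschAux.del t k) := by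
      rw [DeutschAux.PW, Finset.mul_sum]
      exact Finset.sum_congr rfl fun k _ => by ring
    rw [hPW, map_sum]
    refine Finset.sum_congr rfl fun i _ => ?_
    rw [DeutschAux.Fmk ht ht0 i, DeutschAux.Gmk ht ht0 i, PowerSeries.coeff_C_mul,
      DeutschAux.phigam]
    congr 1
  rw [hS]
  have key : (1-3*t) * ((1-3*t) * DeutschAux.Wser t DeutschAux.avf) =
      3*t*DeutschAux.Cc t + (1-3*t)*DeutschAux.Dd t := by
    rw [DeutschAux.idV ht ht0]
    rw [show (1-3*t)*(3*t*DeutschAux.Wser t DeutschAux.onef + DeutschAux.Dd t) =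
        3*t*((1-3*t)*DeutschAux.Wser t DeutschAux.onef) + (1-3*t)*DeutschAux.Dd t from by ring,
      DeutschAux.idT ht ht0]
  calc (DeutschAux.ww t * DeutschAux.Wser t DeutschAux.avf) * ((1-t)*(1-3*t)^2)
      = ((1-t) * DeutschAux.ww t) * ((1-3*t) * ((1-3*t) * DeutschAux.Wser t DeutschAux.avf)) := by
        ring
    _ = ((1-t) * DeutschAux.ww t) * (3*t*DeutschAux.Cc t + (1-3*t)*DeutschAux.Dd t) := by rw [key]
    _ = 3*t*DeutschAux.Cc t + (1-3*t)*DeutschAux.Dd t := by rw [DeutschAux.hw ht0, one_mul]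
    _ = t*(1+3*t) := DeutschAux.final_alg ht ht0
end

section
/- Let t = t(x) be the formal power series satisfying t(1-t)^2 = x with t(0) = 0. Then for n ≥ 1, [x^n] ( t(1+3t)/((1-t)(1-3t)^2) ) = [t^{n-1}] (1+3t)/((1-3t)(1-t)^{2n+2}) = Σ_{k≥0} 3^k ( C(3n-k, n-1-k) + 3·C(3n-1-k, n-2-k) ). -/
open PowerSeries Finset

namespace S16
noncomputable section

/-- Coefficients of the partial fraction expansion of t(1+3t)/((1-t)(1-3t)²). -/
def c : ℕ → ℚ
  | 0 => 0
  | m + 1 => 1 + (m : ℚ) * 3 ^ (m + 1)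

/-- `B k j = [x^{k+j}] t^k` in closed binomial form. -/
def B : ℕ → ℕ → ℚ
  | _, 0 => 1
  | k, j + 1 => ((2*k+3*j+3).choose (j+1) : ℚ) - 3 * ((2*k+3*j+2).choose j : ℚ)

lemma B_succ (k j : ℕ) :
    B k (j+1) = ((2*k+3*j+3).choose (j+1) : ℚ) - 3 * ((2*k+3*j+2).choose j : ℚ) := rfl

lemma crec (m : ℕ) : c (m+3) = 7 * c (m+2) - 15 * c (m+1) + 9 * c m := by
  cases m with
  | zero => simp [c]; norm_num
  | succ m => simp only [c]; push_cast; ring_nf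

lemma B_eq (k j : ℕ) : B k j = ((2*k+3*j).choose j : ℚ)
    - 3 * (if 1 ≤ j then (((2*k+3*j-1).choose (j-1) : ℕ) : ℚ) else 0) := by
  cases j with
  | zero => simp [B]
  | succ j =>
    simp only [B, if_pos (Nat.le_add_left 1 j)]
    congr 3

lemma B0 (j : ℕ) (hj : 1 ≤ j) : B 0 j = 0 := by
  obtain ⟨j, rfl⟩ : ∃ j', j = j' + 1 := ⟨j - 1, by omega⟩
  have hB : B 0 (j+1) = ((3*j+3).choose (j+1) : ℚ) - 3 * ((3*j+2).choose j : ℚ) := by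
    unfold B; norm_num
  rw [hB]
  have h := Nat.add_one_mul_choose_eq (3*j+2) j
  have : ((3*j+2+1) * (3*j+2).choose j : ℚ) = ((3*j+2+1).choose (j+1) * (j+1) : ℕ) := by
    exact_mod_cast congrArg (Nat.cast (R := ℚ)) h
  push_cast at this
  have hj1 : ((j:ℚ)+1) ≠ 0 := by positivity
  rw [sub_eq_zero]
  refine mul_right_cancel₀ hj1 ?_
  linear_combination (-1 : ℚ) * this

set_option maxHeartbeats 2000000 in
lemma BID_main (a b : ℕ) :
    ((a:ℚ)+b+4)*(a+2)*(a+3) * B (a+1) (b+3)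
      = 4*(a+1)*(a+3)*((a:ℚ)+b+4) * B (a+2) (b+2)
        - 3*(a+1)*(a+2)*((a:ℚ)+b+4) * B (a+3) (b+1)
        + (a+1)*(a+2)*(a+3) * B a (b+3) := by
  have e1 : B (a+1) (b+3) = ((2*a+3*b+11).choose (b+3) : ℚ) - 3 * ((2*a+3*b+10).choose (b+2) : ℚ) := by
    rw [B_succ, show 2*(a+1)+3*(b+2)+3 = 2*a+3*b+11 from by omega,
        show 2*(a+1)+3*(b+2)+2 = 2*a+3*b+10 from by omega]
  have e2 : B (a+2) (b+2) = ((2*a+3*b+10).choose (b+2) : ℚ) - 3 * ((2*a+3*b+9).choose (b+1) : ℚ) := by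
    rw [B_succ, show 2*(a+2)+3*(b+1)+3 = 2*a+3*b+10 from by omega,
        show 2*(a+2)+3*(b+1)+2 = 2*a+3*b+9 from by omega]
  have e3 : B (a+3) (b+1) = ((2*a+3*b+9).choose (b+1) : ℚ) - 3 * ((2*a+3*b+8).choose b : ℚ) := by
    rw [B_succ, show 2*(a+3)+3*b+3 = 2*a+3*b+9 from by omega,
        show 2*(a+3)+3*b+2 = 2*a+3*b+8 from by omega]
  have e4 : B a (b+3) = ((2*a+3*b+9).choose (b+3) : ℚ) - 3 * ((2*a+3*b+8).choose (b+2) : ℚ) := by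
    rw [B_succ, show 2*a+3*(b+2)+3 = 2*a+3*b+9 from by omega,
        show 2*a+3*(b+2)+2 = 2*a+3*b+8 from by omega]
  rw [e1, e2, e3, e4]
  have s1 : 2*a+3*b+11 - (b+3) = 2*a+2*b+8 := by omega
  have s2 : 2*a+3*b+10 - (b+2) = 2*a+2*b+8 := by omega
  have s3 : 2*a+3*b+9 - (b+1) = 2*a+2*b+8 := by omega
  have s4 : 2*a+3*b+8 - b = 2*a+2*b+8 := by omega
  have s5 : 2*a+3*b+9 - (b+3) = 2*a+2*b+6 := by omega
  have s6 : 2*a+3*b+8 - (b+2) = 2*a+2*b+6 := by omega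
  rw [Nat.cast_choose ℚ (show b+3 ≤ 2*a+3*b+11 by omega), s1,
      Nat.cast_choose ℚ (show b+2 ≤ 2*a+3*b+10 by omega), s2,
      Nat.cast_choose ℚ (show b+1 ≤ 2*a+3*b+9 by omega), s3,
      Nat.cast_choose ℚ (show b ≤ 2*a+3*b+8 by omega), s4,
      Nat.cast_choose ℚ (show b+3 ≤ 2*a+3*b+9 by omega), s5,
      Nat.cast_choose ℚ (show b+2 ≤ 2*a+3*b+8 by omega), s6]
  have f1 : ((2*a+3*b+11).factorial : ℚ) = (2*a+3*b+11) * ((2*a+3*b+10).factorial : ℚ) := by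
    rw [show 2*a+3*b+11 = (2*a+3*b+10)+1 from by ring, Nat.factorial_succ]; push_cast; ring
  have f2 : ((2*a+3*b+10).factorial : ℚ) = (2*a+3*b+10) * ((2*a+3*b+9).factorial : ℚ) := by
    rw [show 2*a+3*b+10 = (2*a+3*b+9)+1 from by ring, Nat.factorial_succ]; push_cast; ring
  have f3 : ((2*a+3*b+9).factorial : ℚ) = (2*a+3*b+9) * ((2*a+3*b+8).factorial : ℚ) := by
    rw [show 2*a+3*b+9 = (2*a+3*b+8)+1 from by ring, Nat.factorial_succ]; push_cast; ring
  have g1 : ((b+3).factorial : ℚ) = (b+3) * ((b+2).factorial : ℚ) := by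
    rw [show b+3 = (b+2)+1 from by ring, Nat.factorial_succ]; push_cast; ring
  have g2 : ((b+2).factorial : ℚ) = (b+2) * ((b+1).factorial : ℚ) := by
    rw [show b+2 = (b+1)+1 from by ring, Nat.factorial_succ]; push_cast; ring
  have g3 : ((b+1).factorial : ℚ) = (b+1) * ((b).factorial : ℚ) := by
    rw [Nat.factorial_succ]; push_cast; ring
  have d1 : ((2*a+2*b+8).factorial : ℚ) = (2*a+2*b+8) * ((2*a+2*b+7).factorial : ℚ) := by
    rw [show 2*a+2*b+8 = (2*a+2*b+7)+1 from by ring, Nat.factorial_succ]; push_cast; ring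
  have d2 : ((2*a+2*b+7).factorial : ℚ) = (2*a+2*b+7) * ((2*a+2*b+6).factorial : ℚ) := by
    rw [show 2*a+2*b+7 = (2*a+2*b+6)+1 from by ring, Nat.factorial_succ]; push_cast; ring
  rw [f1, f2, f3, g1, g2, g3, d1, d2]
  have nz1 : ((b).factorial : ℚ) ≠ 0 := by positivity
  have nz2 : ((2*a+2*b+6).factorial : ℚ) ≠ 0 := by positivity
  have nz3 : ((2*a+3*b+8).factorial : ℚ) ≠ 0 := by positivity
  field_simp
  ring

lemma B_one (k : ℕ) : B k 1 = 2 * k := by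
  rw [B_succ]
  simp [Nat.choose_one_right]

lemma B_two (k : ℕ) : B k 2 = ((2*k+6).choose 2 : ℚ) - 3 * (2*k+5) := by
  rw [B_succ, show 2*k+3*1+3 = 2*k+6 from by omega, show 2*k+3*1+2 = 2*k+5 from by omega,
     Nat.choose_one_right]
  push_cast; ring

lemma BID (k j : ℕ) (hk : 1 ≤ k) :
    ((k:ℚ)+j)*(k+1)*(k+2) * B k j
      = 4*k*(k+2)*((k:ℚ)+j) * (if 1 ≤ j then B (k+1) (j-1) else 0)
        - 3*k*(k+1)*((k:ℚ)+j) * (if 2 ≤ j then B (k+2) (j-2) else 0)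
        + k*(k+1)*(k+2) * B (k-1) j := by
  obtain ⟨a, rfl⟩ : ∃ a, k = a + 1 := ⟨k - 1, by omega⟩
  simp only [Nat.add_sub_cancel]
  match j with
  | 0 =>
    simp only [show ¬ (1:ℕ) ≤ 0 by omega, if_false, show ¬ (2:ℕ) ≤ 0 by omega]
    show _ * (1:ℚ) = _ * 0 - _ * 0 + _ * (1:ℚ)
    push_cast; ring
  | 1 =>
    norm_num
    rw [B_one, B_one, show B (a+2) 0 = 1 from rfl]
    push_cast; ring
  | 2 =>
    norm_num
    rw [B_two, B_two, B_one, show B (a+3) 0 = 1 from rfl,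
        Nat.cast_choose_two, Nat.cast_choose_two]
    push_cast; ring
  | (b+3) =>
    norm_num
    rw [show a+1+1 = a+2 from rfl, show a+1+2 = a+3 from rfl, show b+3-2 = b+1 from by omega]
    linear_combination BID_main a b

section withT
variable (t : PowerSeries ℚ)

lemma hDt (ht : t * (1 - t) ^ 2 = PowerSeries.X) :
    d⁄dX ℚ t * ((1 - t) * (1 - 3 * t)) = 1 := by
  have h := congrArg (d⁄dX ℚ) ht
  rw [derivative_X, Derivation.leibniz, Derivation.leibniz_pow] at h
  simp only [map_sub, Derivation.map_one_eq_zero, smul_eq_mul, nsmul_eq_mul, pow_one,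
    Nat.cast_ofNat, Nat.add_sub_cancel] at h
  linear_combination h

lemma L3' (ht : t * (1 - t) ^ 2 = PowerSeries.X) (k : ℕ) :
    ((k+2)*(k+3)) • d⁄dX ℚ (t^(k+1)) - (4*(k+1)*(k+3)) • d⁄dX ℚ (t^(k+2))
      + (3*(k+1)*(k+2)) • d⁄dX ℚ (t^(k+3)) = ((k+1)*(k+2)*(k+3)) • t^k := by
  have hD := hDt t ht
  rw [Derivation.leibniz_pow, Derivation.leibniz_pow, Derivation.leibniz_pow]
  simp only [Nat.add_sub_cancel, smul_eq_mul, nsmul_eq_mul]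
  push_cast
  linear_combination (((k:ℚ⟦X⟧)+1)*((k:ℚ⟦X⟧)+2)*((k:ℚ⟦X⟧)+3) * t^k) * hD

lemma coeff_pow_vanish (ht0 : PowerSeries.constantCoeff t = 0)
    {n k : ℕ} (h : n < k) : PowerSeries.coeff n (t^k) = 0 :=
  X_pow_dvd_iff.mp (pow_dvd_pow_of_dvd (X_dvd_iff.mpr ht0) k) n h

lemma coeff_pow_eq (ht : t * (1 - t) ^ 2 = PowerSeries.X)
    (ht0 : PowerSeries.constantCoeff t = 0) :
    ∀ n k, 1 ≤ k → k ≤ n → PowerSeries.coeff n (t^k) = B k (n-k) := by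
  intro n
  induction n using Nat.strong_induction_on with
  | _ n IH =>
  have inner : ∀ j k, 1 ≤ k → k + j = n → PowerSeries.coeff n (t^k) = B k j := by
    intro j
    induction j using Nat.strong_induction_on with
    | _ j IHj =>
    intro k hk hkj
    obtain ⟨a, rfl⟩ : ∃ a, k = a + 1 := ⟨k - 1, by omega⟩
    obtain ⟨m, rfl⟩ : ∃ m, n = m + 1 := ⟨n - 1, by omega⟩
    have hre := congrArg (PowerSeries.coeff m) (L3' t ht a)
    simp only [map_sub, map_add, map_nsmul, coeff_derivative] at hre
    simp only [nsmul_eq_mul, smul_eq_mul] at hre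
    push_cast at hre
    have hA1 : PowerSeries.coeff (m+1) (t^(a+2)) = (if 1 ≤ j then B (a+2) (j-1) else 0) := by
      by_cases hj : 1 ≤ j
      · rw [if_pos hj, IHj (j-1) (by omega) (a+2) (by omega) (by omega)]
      · rw [if_neg hj, coeff_pow_vanish t ht0 (by omega)]
    have hA2 : PowerSeries.coeff (m+1) (t^(a+3)) = (if 2 ≤ j then B (a+3) (j-2) else 0) := by
      by_cases hj : 2 ≤ j
      · rw [if_pos hj, IHj (j-2) (by omega) (a+3) (by omega) (by omega)]
      · rw [if_neg hj, coeff_pow_vanish t ht0 (by omega)]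
    have hR : PowerSeries.coeff m (t^a) = B a j := by
      rcases Nat.eq_zero_or_pos a with rfl | ha
      · rw [pow_zero]
        rcases Nat.eq_zero_or_pos j with rfl | hj
        · have : m = 0 := by omega
          subst this
          simp [B]
        · have hm0 : m ≠ 0 := by omega
          rw [B0 j hj]
          simp [PowerSeries.coeff_one, hm0]
      · rw [IH m (by omega) a ha (by omega), show m - a = j from by omega]
    rw [hA1] at hre
    rw [hA2] at hre
    rw [hR] at hre
    have hbid := BID (a+1) j (by omega)
    simp only [Nat.add_sub_cancel, show a+1+1 = a+2 from rfl, show a+1+2 = a+3 from rfl] at hbid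
    have hnz : (((m:ℚ)+1) * ((a:ℚ)+2) * ((a:ℚ)+3)) ≠ 0 := by positivity
    apply mul_left_cancel₀ hnz
    push_cast at hbid ⊢
    have hn' : (m : ℚ) + 1 = (a:ℚ) + 1 + j := by
      have : m + 1 = a + 1 + j := by omega
      exact_mod_cast congrArg (Nat.cast (R := ℚ)) this
    rw [hn'] at hre ⊢
    linear_combination hre - hbid
  intro k hk hkn
  exact inner (n-k) k hk (by omega)

end withT

def Sp (n : ℕ) : Polynomial ℚ := ∑ k ∈ range (n+1), Polynomial.C (c k) * Polynomial.X ^ k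

def Dp : Polynomial ℚ := (1 - Polynomial.X) * (1 - 3 * Polynomial.X) ^ 2

lemma key : ∀ m : ℕ, Polynomial.X * (1 + 3 * Polynomial.X) - Sp (m+1) * Dp
    = Polynomial.X ^ (m+2) * (Polynomial.C (c (m+2))
        + Polynomial.C (9 * c m - 15 * c (m+1)) * Polynomial.X
        + Polynomial.C (9 * c (m+1)) * Polynomial.X ^ 2) := by
  intro m
  induction m with
  | zero =>
    simp [Sp, Dp, Finset.sum_range_succ, c, map_sub, map_add, map_mul, map_ofNat, map_one]
    norm_num
    ring
  | succ m ih =>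
    have hSp : Sp (m+2) = Sp (m+1) + Polynomial.C (c (m+2)) * Polynomial.X ^ (m+2) := by
      rw [Sp, Finset.sum_range_succ]; rfl
    have hc : (Polynomial.C (c (m+3)) : Polynomial ℚ)
        = 7 * Polynomial.C (c (m+2)) - 15 * Polynomial.C (c (m+1)) + 9 * Polynomial.C (c m) := by
      rw [crec m]; simp only [map_add, map_sub, map_mul, map_ofNat]
    have hd : (Polynomial.C (9 * c (m+1) - 15 * c (m+2)) : Polynomial ℚ)
        = 9 * Polynomial.C (c (m+1)) - 15 * Polynomial.C (c (m+2)) := by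
      simp only [map_sub, map_mul, map_ofNat]
    have hd2 : (Polynomial.C (9 * c (m+2)) : Polynomial ℚ) = 9 * Polynomial.C (c (m+2)) := by
      simp only [map_mul, map_ofNat]
    have hd3 : (Polynomial.C (9 * c m - 15 * c (m+1)) : Polynomial ℚ)
        = 9 * Polynomial.C (c m) - 15 * Polynomial.C (c (m+1)) := by
      simp only [map_sub, map_mul, map_ofNat]
    rw [hSp, show m+1+1 = m+2 from rfl, show m+1+2 = m+3 from rfl, hc, hd, hd2]
    have hd4 : (Polynomial.C (9 * c (m+1)) : Polynomial ℚ) = 9 * Polynomial.C (c (m+1)) := by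
      simp only [map_mul, map_ofNat]
    rw [hd3, hd4] at ih
    have hDp : (Dp : Polynomial ℚ) = (1 - Polynomial.X) * (1 - 3 * Polynomial.X) ^ 2 := rfl
    calc Polynomial.X * (1 + 3 * Polynomial.X) - (Sp (m+1) + Polynomial.C (c (m+2)) * Polynomial.X ^ (m+2)) * Dp
        = (Polynomial.X * (1 + 3 * Polynomial.X) - Sp (m+1) * Dp)
            - Polynomial.C (c (m+2)) * Polynomial.X ^ (m+2) * Dp := by ring
      _ = _ := by rw [ih, hDp]; ring

lemma coeff_g (t : PowerSeries ℚ) (ht0 : PowerSeries.constantCoeff t = 0)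
    (n : ℕ) (hn : 1 ≤ n) :
    PowerSeries.coeff n (t * (1 + 3 * t) * ((1 - t) * (1 - 3 * t) ^ 2)⁻¹)
      = ∑ k ∈ range (n+1), c k * PowerSeries.coeff n (t^k) := by
  obtain ⟨m, rfl⟩ : ∃ m, n = m + 1 := ⟨n - 1, by omega⟩
  have hD0 : PowerSeries.constantCoeff ((1 - t) * (1 - 3 * t) ^ 2) = 1 := by
    simp [ht0]
  have hDne : PowerSeries.constantCoeff ((1 - t) * (1 - 3 * t) ^ 2) ≠ 0 := by
    rw [hD0]; norm_num
  have hkey := congrArg (Polynomial.aeval t) (key m)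
  simp only [map_sub, map_mul, map_add, map_pow, Polynomial.aeval_X, Polynomial.aeval_C,
    Polynomial.aeval_one, map_ofNat, Sp, Dp, map_sum, ← PowerSeries.C_eq_algebraMap] at hkey
  set w : PowerSeries ℚ := PowerSeries.C (c (m+2))
      + (9 * PowerSeries.C (c m) - 15 * PowerSeries.C (c (m+1))) * t
      + 9 * PowerSeries.C (c (m+1)) * t ^ 2 with hw
  set gS : PowerSeries ℚ := ∑ k ∈ range (m+2), PowerSeries.C (c k) * t ^ k with hgS
  have hkey2 : t * (1 + 3 * t) = gS * ((1 - t) * (1 - 3 * t) ^ 2) + t ^ (m+2) * w := by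
    linear_combination hkey
  have e : t * (1 + 3 * t) * ((1 - t) * (1 - 3 * t) ^ 2)⁻¹
      = gS + t ^ (m+2) * (w * ((1 - t) * (1 - 3 * t) ^ 2)⁻¹) := by
    rw [hkey2, add_mul, mul_assoc gS, PowerSeries.mul_inv_cancel _ hDne, mul_one, mul_assoc]
  rw [e, map_add]
  have hdvd : (PowerSeries.X : ℚ⟦X⟧) ^ (m+2) ∣ t ^ (m+2) * (w * ((1 - t) * (1 - 3 * t) ^ 2)⁻¹) :=
    Dvd.dvd.mul_right (pow_dvd_pow_of_dvd (PowerSeries.X_dvd_iff.mpr ht0) _) _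
  rw [PowerSeries.X_pow_dvd_iff.mp hdvd (m+1) (by omega), add_zero, hgS, map_sum]
  exact Finset.sum_congr rfl fun k _ => PowerSeries.coeff_C_mul _ _ _

def G : PowerSeries ℚ := PowerSeries.mk fun m => (3:ℚ)^m

lemma hG : G * (1 - 3 * PowerSeries.X) = 1 := by
  have e : G * (1 - 3 * PowerSeries.X) = G - (3:ℚ) • (G * PowerSeries.X ^ 1) := by
    simp only [smul_eq_C_mul, map_ofNat, pow_one]; ring
  rw [e]
  ext j
  simp only [map_sub, PowerSeries.coeff_smul, PowerSeries.coeff_mul_X_pow', G, coeff_mk,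
    smul_eq_mul, PowerSeries.coeff_one]
  rcases j with _ | j
  · norm_num
  · simp only [show (1:ℕ) ≤ j + 1 from by omega, if_true, Nat.add_sub_cancel, pow_succ,
      Nat.succ_ne_zero, if_false]
    ring

lemma MKC : PowerSeries.mk c * ((1 - PowerSeries.X) * (1 - 3 * PowerSeries.X) ^ 2)
    = PowerSeries.X * (1 + 3 * PowerSeries.X) := by
  have e : PowerSeries.mk c * ((1 - PowerSeries.X) * (1 - 3 * PowerSeries.X) ^ 2)
      = PowerSeries.mk c - (7:ℚ) • (PowerSeries.mk c * PowerSeries.X ^ 1)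
        + (15:ℚ) • (PowerSeries.mk c * PowerSeries.X ^ 2)
        - (9:ℚ) • (PowerSeries.mk c * PowerSeries.X ^ 3) := by
    simp only [smul_eq_C_mul, map_ofNat]; ring
  have e2 : (PowerSeries.X * (1 + 3 * PowerSeries.X) : ℚ⟦X⟧)
      = PowerSeries.X ^ 1 + (3:ℚ) • PowerSeries.X ^ 2 := by
    simp only [smul_eq_C_mul, map_ofNat]; ring
  rw [e, e2]
  ext j
  simp only [map_sub, map_add, PowerSeries.coeff_smul, PowerSeries.coeff_mul_X_pow', coeff_mk,
    smul_eq_mul, PowerSeries.coeff_X_pow]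
  rcases j with _ | _ | _ | j
  · norm_num [c]
  · norm_num [c]
  · norm_num [c]
  · have h3 : (1:ℕ) ≤ j + 3 := by omega
    have h2 : (2:ℕ) ≤ j + 3 := by omega
    have h1 : (3:ℕ) ≤ j + 3 := by omega
    simp only [show j+1+1+1 = j+3 from rfl, h1, h2, h3, if_true,
      show j+3-1 = j+2 from by omega, show j+3-2 = j+1 from by omega,
      show j+3-3 = j from by omega,
      Nat.add_sub_cancel, show ¬(j+3 = 1) from by omega, show ¬(j+3 = 2) from by omega, if_false]
    have := crec j
    linarith [crec j]

lemma coeffV (n j : ℕ) :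
    PowerSeries.coeff j ((1 - 3 * PowerSeries.X) * (invOneSubPow ℚ (2*n+1)).val)
      = ((2*n+j).choose (2*n) : ℚ)
        - 3 * (if 1 ≤ j then ((2*n+(j-1)).choose (2*n) : ℚ) else 0) := by
  have hU : ((invOneSubPow ℚ (2*n+1)).val : ℚ⟦X⟧)
      = PowerSeries.mk fun m => ((2*n+m).choose (2*n) : ℚ) := by
    rw [invOneSubPow_val_succ_eq_mk_add_choose]
  have e : (1 - 3 * PowerSeries.X) * (invOneSubPow ℚ (2*n+1)).val
      = (invOneSubPow ℚ (2*n+1)).val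
        - (3:ℚ) • ((invOneSubPow ℚ (2*n+1)).val * PowerSeries.X ^ 1) := by
    simp only [smul_eq_C_mul, map_ofNat, pow_one]; ring
  rw [e, map_sub, PowerSeries.coeff_smul, PowerSeries.coeff_mul_X_pow', hU]
  simp only [coeff_mk, smul_eq_mul]

lemma match_BV (n k : ℕ) (hk : k ≤ n) :
    PowerSeries.coeff (n-k) ((1 - 3 * PowerSeries.X) * (invOneSubPow ℚ (2*n+1)).val)
      = B k (n-k) := by
  rw [coeffV, B_eq]
  have hsymm : ∀ a b : ℕ, (a+b).choose a = (a+b).choose b := fun a b => by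
    rw [← Nat.choose_symm (show b ≤ a+b by omega), Nat.add_sub_cancel]
  set j := n - k with hj
  have h1 : 2*k+3*j = 2*n+j := by omega
  congr 1
  · rw [h1, hsymm (2*n) j]
  · by_cases h : 1 ≤ j
    · rw [if_pos h, if_pos h, show 2*k+3*j-1 = 2*n+(j-1) from by omega, hsymm (2*n) (j-1)]
    · rw [if_neg h, if_neg h]

lemma constQ (n : ℕ) :
    PowerSeries.constantCoeff ((1 - 3 * PowerSeries.X) * (1 - PowerSeries.X) ^ (2*n+2) : ℚ⟦X⟧) = 1 := by
  simp

lemma Qne (n : ℕ) :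
    ((1 - 3 * PowerSeries.X) * (1 - PowerSeries.X) ^ (2*n+2) : ℚ⟦X⟧) ≠ 0 := by
  intro h
  have := constQ n
  rw [h] at this
  simp at this

lemma WZ (n : ℕ) :
    PowerSeries.mk c * ((1 - 3 * PowerSeries.X) * (invOneSubPow ℚ (2*n+1)).val)
      = PowerSeries.X * (1 + 3 * PowerSeries.X)
        * ((1 - 3 * PowerSeries.X) * (1 - PowerSeries.X) ^ (2*n+2))⁻¹ := by
  set Q : ℚ⟦X⟧ := (1 - 3 * PowerSeries.X) * (1 - PowerSeries.X) ^ (2*n+2) with hQ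
  have hQne : Q ≠ 0 := Qne n
  have hQc : PowerSeries.constantCoeff Q ≠ 0 := by rw [constQ]; norm_num
  apply mul_right_cancel₀ hQne
  rw [mul_assoc (PowerSeries.X * (1 + 3 * PowerSeries.X)) _ Q,
    PowerSeries.inv_mul_cancel _ hQc, mul_one]
  have hunit : ((invOneSubPow ℚ (2*n+1)).val * (1 - PowerSeries.X) ^ (2*n+1) : ℚ⟦X⟧) = 1 := by
    have := (invOneSubPow ℚ (2*n+1)).val_inv
    rwa [invOneSubPow_inv_eq_one_sub_pow] at this
  calc PowerSeries.mk c * ((1 - 3 * PowerSeries.X) * (invOneSubPow ℚ (2*n+1)).val) * Q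
      = PowerSeries.mk c * ((1 - PowerSeries.X) * (1 - 3 * PowerSeries.X) ^ 2)
          * ((invOneSubPow ℚ (2*n+1)).val * (1 - PowerSeries.X) ^ (2*n+1)) := by
        rw [hQ]; ring
    _ = PowerSeries.X * (1 + 3 * PowerSeries.X) := by rw [hunit, mul_one, MKC]

lemma coeffW (n : ℕ) :
    PowerSeries.coeff n
        (PowerSeries.mk c * ((1 - 3 * PowerSeries.X) * (invOneSubPow ℚ (2*n+1)).val))
      = ∑ k ∈ range (n+1), c k * B k (n-k) := by
  rw [PowerSeries.coeff_mul, Finset.Nat.sum_antidiagonal_eq_sum_range_succ_mk]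
  exact Finset.sum_congr rfl fun k hk => by
    rw [coeff_mk, match_BV n k (by simp at hk; omega)]

lemma coeffH (n j : ℕ) :
    PowerSeries.coeff j ((1 + 3 * PowerSeries.X) * (invOneSubPow ℚ (2*n+2)).val)
      = (((2*n+1)+j).choose (2*n+1) : ℚ)
        + 3 * (if 1 ≤ j then (((2*n+1)+(j-1)).choose (2*n+1) : ℚ) else 0) := by
  have hU : ((invOneSubPow ℚ (2*n+2)).val : ℚ⟦X⟧)
      = PowerSeries.mk fun m => (((2*n+1)+m).choose (2*n+1) : ℚ) := by
    rw [show 2*n+2 = (2*n+1)+1 from rfl, invOneSubPow_val_succ_eq_mk_add_choose]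
  have e : (1 + 3 * PowerSeries.X) * (invOneSubPow ℚ (2*n+2)).val
      = (invOneSubPow ℚ (2*n+2)).val
        + (3:ℚ) • ((invOneSubPow ℚ (2*n+2)).val * PowerSeries.X ^ 1) := by
    simp only [smul_eq_C_mul, map_ofNat, pow_one]; ring
  rw [e, map_add, PowerSeries.coeff_smul, PowerSeries.coeff_mul_X_pow', hU]
  simp only [coeff_mk, smul_eq_mul]

lemma GH (n : ℕ) :
    ((1 + 3 * PowerSeries.X) * ((1 - 3 * PowerSeries.X) * (1 - PowerSeries.X) ^ (2*n+2))⁻¹ : ℚ⟦X⟧)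
      = G * ((1 + 3 * PowerSeries.X) * (invOneSubPow ℚ (2*n+2)).val) := by
  have hQc : PowerSeries.constantCoeff
      ((1 - 3 * PowerSeries.X) * (1 - PowerSeries.X) ^ (2*n+2) : ℚ⟦X⟧) ≠ 0 := by
    rw [constQ]; norm_num
  apply mul_right_cancel₀ (Qne n)
  rw [mul_assoc (1 + 3 * PowerSeries.X) _ _, PowerSeries.inv_mul_cancel _ hQc, mul_one]
  symm
  have hunit : ((invOneSubPow ℚ (2*n+2)).val * (1 - PowerSeries.X) ^ (2*n+2) : ℚ⟦X⟧) = 1 := by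
    have := (invOneSubPow ℚ (2*n+2)).val_inv
    rwa [invOneSubPow_inv_eq_one_sub_pow] at this
  calc G * ((1 + 3 * PowerSeries.X) * (invOneSubPow ℚ (2*n+2)).val)
        * ((1 - 3 * PowerSeries.X) * (1 - PowerSeries.X) ^ (2*n+2))
      = (G * (1 - 3 * PowerSeries.X)) * (1 + 3 * PowerSeries.X)
          * ((invOneSubPow ℚ (2*n+2)).val * (1 - PowerSeries.X) ^ (2*n+2)) := by ring
    _ = 1 + 3 * PowerSeries.X := by rw [hG, hunit, one_mul, mul_one]

lemma RHS1_eq (n : ℕ) (hn : 1 ≤ n) :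
    PowerSeries.coeff (n-1)
        ((1 + 3 * PowerSeries.X) * ((1 - 3 * PowerSeries.X) * (1 - PowerSeries.X) ^ (2*n+2))⁻¹)
      = ∑ k ∈ Finset.range n,
          (3 : ℚ) ^ k * (((3 * n - k).choose (n - 1 - k) : ℚ) +
            3 * (if k + 2 ≤ n then ((3 * n - 1 - k).choose (n - 2 - k) : ℚ) else 0)) := by
  rw [GH n, PowerSeries.coeff_mul, Finset.Nat.sum_antidiagonal_eq_sum_range_succ_mk,
    show (n-1).succ = n from by omega]
  refine Finset.sum_congr rfl fun k hk => ?_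
  dsimp only
  simp only [Finset.mem_range] at hk
  rw [G, coeff_mk, coeffH]
  have hsymm : ∀ a b : ℕ, (a+b).choose a = (a+b).choose b := fun a b => by
    rw [← Nat.choose_symm (show b ≤ a+b by omega), Nat.add_sub_cancel]
  congr 2
  · rw [show 2*n+1+(n-1-k) = (n-1-k) + (2*n+1) from by omega,
        show 3*n-k = (n-1-k) + (2*n+1) from by omega]
    rw [← hsymm (n-1-k) (2*n+1), hsymm _ _]
  · by_cases h : k+2 ≤ n
    · rw [if_pos (show 1 ≤ n-1-k by omega), if_pos h,
        show 2*n+1+(n-1-k-1) = (n-2-k) + (2*n+1) from by omega,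
        show 3*n-1-k = (n-2-k) + (2*n+1) from by omega]
      rw [← hsymm (n-2-k) (2*n+1), hsymm _ _]
    · rw [if_neg (show ¬ 1 ≤ n-1-k by omega), if_neg h]

end
end S16

/-- With t = t(x) the power series solution of t(1-t)² = x,
t(0) = 0, for n ≥ 1:
[xⁿ] t(1+3t)/((1-t)(1-3t)²) = [t^{n-1}] (1+3t)/((1-3t)(1-t)^{2n+2})
  = Σ_{k≥0} 3ᵏ(C(3n-k, n-1-k) + 3 C(3n-1-k, n-2-k))
(binomials vanishing for negative lower index, so only k < n contributes). -/
theorem area_coefficient_extraction (t : PowerSeries ℚ)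
    (ht : t * (1 - t) ^ 2 = PowerSeries.X)
    (ht0 : PowerSeries.constantCoeff t = 0) (n : ℕ) (hn : 1 ≤ n) :
    PowerSeries.coeff n (t * (1 + 3 * t) * ((1 - t) * (1 - 3 * t) ^ 2)⁻¹) =
        PowerSeries.coeff (n - 1)
          ((1 + 3 * PowerSeries.X) *
            ((1 - 3 * PowerSeries.X) * (1 - PowerSeries.X) ^ (2 * n + 2))⁻¹) ∧
      PowerSeries.coeff n (t * (1 + 3 * t) * ((1 - t) * (1 - 3 * t) ^ 2)⁻¹) =
        ∑ k ∈ Finset.range n,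
          (3 : ℚ) ^ k * (((3 * n - k).choose (n - 1 - k) : ℚ) +
            3 * (if k + 2 ≤ n then ((3 * n - 1 - k).choose (n - 2 - k) : ℚ) else 0)) := by
  have h1 : PowerSeries.coeff n (t * (1 + 3 * t) * ((1 - t) * (1 - 3 * t) ^ 2)⁻¹)
      = ∑ k ∈ Finset.range (n+1), S16.c k * S16.B k (n-k) := by
    rw [S16.coeff_g t ht0 n hn]
    refine Finset.sum_congr rfl fun k hk => ?_
    rcases Nat.eq_zero_or_pos k with rfl | hkpos
    · simp [S16.c]
    · rw [S16.coeff_pow_eq t ht ht0 n k hkpos (by simp only [Finset.mem_range] at hk; omega)]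
  have h2 : (∑ k ∈ Finset.range (n+1), S16.c k * S16.B k (n-k))
      = PowerSeries.coeff (n - 1)
          ((1 + 3 * PowerSeries.X) *
            ((1 - 3 * PowerSeries.X) * (1 - PowerSeries.X) ^ (2 * n + 2))⁻¹) := by
    obtain ⟨m, rfl⟩ : ∃ m, n = m + 1 := ⟨n - 1, by omega⟩
    rw [← S16.coeffW (m+1), S16.WZ (m+1), mul_assoc, PowerSeries.coeff_succ_X_mul,
      show m + 1 - 1 = m from by omega]
  refine ⟨h1.trans h2, h1.trans (h2.trans (S16.RHS1_eq n hn))⟩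
end
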